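/- arXiv:2312.12052 — 7 statements merged into one kernel-verified Lean document; each statement's English description precedes it below -/
import Mathlib

section
/- If Alice has a winning strategy in the (Point, Open)-Set game on a space X, then Bob has a winning strategy in the R-nw-selective game on X. -/
open Set Cardinal TopologicalSpace

/-- A family of subsets is a *network*: every point and open neighbourhood admit a
member of the family squeezed between them. -/
def IsNetwork {X : Type*} [TopologicalSpace X] (𝒩 : Set (Set X)) : Prop :=
  ∀ (x : X) (U : Set X), IsOpen U → x ∈ U → ∃ N ∈ 𝒩, x ∈ N ∧ N ⊆ U

/-- The collection of countable networks of a space. -/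
def CtblNetwork (X : Type*) [TopologicalSpace X] : Set (Set (Set X)) :=
  {𝒩 | 𝒩.Countable ∧ IsNetwork 𝒩}

/-- The weight of a topological space: the least cardinality of a basis. -/
noncomputable def topWeight (X : Type*) [TopologicalSpace X] : Cardinal :=
  sInf { c | ∃ B : Set (Set X), TopologicalSpace.IsTopologicalBasis B ∧ Cardinal.mk B = c }

/-! ### The R-nw-selective game -/

/-- A strategy for Bob in the R-nw-selective game: given Alice's moves so far
(the networks played in innings `0,…,n`), Bob picks a set. -/
def RBobStrategy (X : Type*) [TopologicalSpace X] : Type _ :=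
  ∀ n : ℕ, (Fin (n + 1) → Set (Set X)) → Set X

/-- Bob's strategy `σ` is winning in the R-nw-selective game: against any run where Alice
plays countable networks, Bob's answers are legal and form a network. -/
def RBobWinning {X : Type*} [TopologicalSpace X] (σ : RBobStrategy X) : Prop :=
  ∀ A : ℕ → Set (Set X), (∀ n, A n ∈ CtblNetwork X) →
    (∀ n, σ n (fun i => A i.1) ∈ A n) ∧
    IsNetwork (Set.range fun n => σ n (fun i : Fin (n + 1) => A i.1))

/-- Bob has a winning strategy in the R-nw-selective game. -/
def RBobWins (X : Type*) [TopologicalSpace X] : Prop :=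
  ∃ σ : RBobStrategy X, RBobWinning σ

/-- A strategy for Alice in the R-nw-selective game: given Bob's previous picks,
Alice plays a (countable) network. -/
def RAliceStrategy (X : Type*) [TopologicalSpace X] : Type _ :=
  ∀ n : ℕ, (Fin n → Set X) → Set (Set X)

/-- Alice's strategy `α` is winning in the R-nw-selective game: it always plays countable
networks, and no legal sequence of Bob's answers forms a network. -/
def RAliceWinning {X : Type*} [TopologicalSpace X] (α : RAliceStrategy X) : Prop :=
  (∀ n h, α n h ∈ CtblNetwork X) ∧
  ∀ b : ℕ → Set X, (∀ n, b n ∈ α n (fun i : Fin n => b i.1)) → ¬ IsNetwork (Set.range b)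

/-- Alice has a winning strategy in the R-nw-selective game. -/
def RAliceWins (X : Type*) [TopologicalSpace X] : Prop :=
  ∃ α : RAliceStrategy X, RAliceWinning α

/-- The R-nw-selective selection principle. -/
def RNwSelective (X : Type*) [TopologicalSpace X] : Prop :=
  ∀ A : ℕ → Set (Set X), (∀ n, A n ∈ CtblNetwork X) →
    ∃ b : ℕ → Set X, (∀ n, b n ∈ A n) ∧ IsNetwork (Set.range b)

/-! ### The M-nw-selective game -/

/-- A strategy for Bob in the M-nw-selective game: given Alice's networks so far,
Bob picks a finite collection of sets. -/
def MBobStrategy (X : Type*) [TopologicalSpace X] : Type _ :=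
  ∀ n : ℕ, (Fin (n + 1) → Set (Set X)) → Finset (Set X)

/-- Bob's strategy is winning in the M-nw-selective game. -/
def MBobWinning {X : Type*} [TopologicalSpace X] (σ : MBobStrategy X) : Prop :=
  ∀ A : ℕ → Set (Set X), (∀ n, A n ∈ CtblNetwork X) →
    (∀ n, ↑(σ n (fun i => A i.1)) ⊆ A n) ∧
    IsNetwork (⋃ n, (↑(σ n (fun i : Fin (n + 1) => A i.1)) : Set (Set X)))

/-- Bob has a winning strategy in the M-nw-selective game. -/
def MBobWins (X : Type*) [TopologicalSpace X] : Prop :=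
  ∃ σ : MBobStrategy X, MBobWinning σ

/-- A strategy for Alice in the M-nw-selective game. -/
def MAliceStrategy (X : Type*) [TopologicalSpace X] : Type _ :=
  ∀ n : ℕ, (Fin n → Finset (Set X)) → Set (Set X)

/-- Alice's strategy is winning in the M-nw-selective game. -/
def MAliceWinning {X : Type*} [TopologicalSpace X] (α : MAliceStrategy X) : Prop :=
  (∀ n h, α n h ∈ CtblNetwork X) ∧
  ∀ b : ℕ → Finset (Set X), (∀ n, ↑(b n) ⊆ α n (fun i : Fin n => b i.1)) →
    ¬ IsNetwork (⋃ n, (↑(b n) : Set (Set X)))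

/-- Alice has a winning strategy in the M-nw-selective game. -/
def MAliceWins (X : Type*) [TopologicalSpace X] : Prop :=
  ∃ α : MAliceStrategy X, MAliceWinning α

/-- The M-nw-selective selection principle. -/
def MNwSelective (X : Type*) [TopologicalSpace X] : Prop :=
  ∀ A : ℕ → Set (Set X), (∀ n, A n ∈ CtblNetwork X) →
    ∃ F : ℕ → Finset (Set X), (∀ n, ↑(F n) ⊆ A n) ∧
      IsNetwork (⋃ n, (↑(F n) : Set (Set X)))

/-! ### The (Point, Open)-Set game -/

/-- A strategy for Alice in the (Point, Open)-Set game: given Bob's previous picks,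
Alice plays a point together with an open neighbourhood of it. -/
def POAliceStrategy (X : Type*) [TopologicalSpace X] : Type _ :=
  ∀ n : ℕ, (Fin n → Set X) → X × Set X

/-- Alice's strategy is winning in the (Point, Open)-Set game: her moves are legal
(a point inside an open set), and every legal sequence of Bob's answers is a network. -/
def POAliceWinning {X : Type*} [TopologicalSpace X] (α : POAliceStrategy X) : Prop :=
  (∀ n h, (α n h).1 ∈ (α n h).2 ∧ IsOpen (α n h).2) ∧
  ∀ b : ℕ → Set X,
    (∀ n, (α n (fun i : Fin n => b i.1)).1 ∈ b n ∧ b n ⊆ (α n (fun i : Fin n => b i.1)).2) →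
    IsNetwork (Set.range b)

/-- Alice has a winning strategy in the (Point, Open)-Set game. -/
def POAliceWins (X : Type*) [TopologicalSpace X] : Prop :=
  ∃ α : POAliceStrategy X, POAliceWinning α

/-- A strategy for Bob in the (Point, Open)-Set game. -/
def POBobStrategy (X : Type*) [TopologicalSpace X] : Type _ :=
  ∀ n : ℕ, (Fin (n + 1) → X × Set X) → Set X

/-- Bob's strategy is winning in the (Point, Open)-Set game: his answers are legal and
never form a network, whenever Alice plays legally. -/
def POBobWinning {X : Type*} [TopologicalSpace X] (σ : POBobStrategy X) : Prop :=
  ∀ A : ℕ → X × Set X, (∀ n, (A n).1 ∈ (A n).2 ∧ IsOpen (A n).2) →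
    (∀ n, (A n).1 ∈ σ n (fun i => A i.1) ∧ σ n (fun i => A i.1) ⊆ (A n).2) ∧
    ¬ IsNetwork (Set.range fun n => σ n (fun i : Fin (n + 1) => A i.1))

/-- Bob has a winning strategy in the (Point, Open)-Set game. -/
def POBobWins (X : Type*) [TopologicalSpace X] : Prop :=
  ∃ σ : POBobStrategy X, POBobWinning σ

/-! ### The game `G_k(Nw, Nw)` -/

/-- Bob's strategy (same shape as in the M-game) is winning in `G_k(Nw,Nw)`:
he always selects exactly `k` elements of Alice's network, and his selections
accumulate to a network. -/
def GkBobWinning {X : Type*} [TopologicalSpace X] (k : ℕ) (σ : MBobStrategy X) : Prop :=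
  ∀ A : ℕ → Set (Set X), (∀ n, A n ∈ CtblNetwork X) →
    (∀ n, ↑(σ n (fun i => A i.1)) ⊆ A n ∧ (σ n (fun i : Fin (n + 1) => A i.1)).card = k) ∧
    IsNetwork (⋃ n, (↑(σ n (fun i : Fin (n + 1) => A i.1)) : Set (Set X)))

/-- Bob has a winning strategy in `G_k(Nw,Nw)`. -/
def GkBobWins (X : Type*) [TopologicalSpace X] (k : ℕ) : Prop :=
  ∃ σ : MBobStrategy X, GkBobWinning k σ

/-- Alice's strategy is winning in `G_k(Nw,Nw)`. -/
def GkAliceWinning {X : Type*} [TopologicalSpace X] (k : ℕ) (α : MAliceStrategy X) : Prop :=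
  (∀ n h, α n h ∈ CtblNetwork X) ∧
  ∀ b : ℕ → Finset (Set X),
    (∀ n, ↑(b n) ⊆ α n (fun i : Fin n => b i.1) ∧ (b n).card = k) →
    ¬ IsNetwork (⋃ n, (↑(b n) : Set (Set X)))

/-- Alice has a winning strategy in `G_k(Nw,Nw)`. -/
def GkAliceWins (X : Type*) [TopologicalSpace X] (k : ℕ) : Prop :=
  ∃ α : MAliceStrategy X, GkAliceWinning k α

/-! ### Cardinal characteristics and Martin's Axiom -/

/-- `cov(M)`: the least cardinality of a family of meager subsets of `ℝ` covering `ℝ`. -/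
noncomputable def covMeager : Cardinal :=
  sInf { c | ∃ S : Set (Set ℝ), (∀ A ∈ S, IsMeagre A) ∧ ⋃₀ S = Set.univ ∧ Cardinal.mk S = c }

/-- `𝔡`: the dominating number, the least cardinality of a dominating family in `ω^ω`. -/
noncomputable def domNumber : Cardinal :=
  sInf { c | ∃ D : Set (ℕ → ℕ), (∀ g : ℕ → ℕ, ∃ f ∈ D, ∀ᶠ n in Filter.atTop, g n ≤ f n) ∧
    Cardinal.mk D = c }

/-- A subset of a poset is dense (downwards). -/
def PosetDense {P : Type*} [Preorder P] (D : Set P) : Prop :=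
  ∀ p : P, ∃ q ∈ D, q ≤ p

/-- A filter on a poset: nonempty, upwards closed and downwards directed. -/
def PosetFilter {P : Type*} [Preorder P] (F : Set P) : Prop :=
  F.Nonempty ∧ (∀ p ∈ F, ∀ q, p ≤ q → q ∈ F) ∧
    ∀ p ∈ F, ∀ q ∈ F, ∃ r ∈ F, r ≤ p ∧ r ≤ q

/-- The countable chain condition for a poset: every antichain is countable. -/
def PosetCCC (P : Type*) [Preorder P] : Prop :=
  ∀ A : Set P, (∀ p ∈ A, ∀ q ∈ A, p ≠ q → ¬ ∃ r, r ≤ p ∧ r ≤ q) → A.Countable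

/-- Martin's Axiom below the cardinal `c`: for every nonempty ccc poset and every family of
fewer than `c` dense sets, there is a filter meeting all of them. -/
def MartinsAxiomBelow (c : Cardinal) : Prop :=
  ∀ (P : Type) [Preorder P], Nonempty P → PosetCCC P →
    ∀ 𝒟 : Set (Set P), (∀ D ∈ 𝒟, PosetDense D) → Cardinal.mk 𝒟 < c →
      ∃ F : Set P, PosetFilter F ∧ ∀ D ∈ 𝒟, (F ∩ D).Nonempty

open Classical in
/-- Pick an element of `A` between `x` and `U` if one exists. -/
noncomputable def pickN {X : Type*} (A : Set (Set X)) (x : X) (U : Set X) : Set X :=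
  if h : ∃ N ∈ A, x ∈ N ∧ N ⊆ U then h.choose else ∅

lemma pickN_spec {X : Type*} {A : Set (Set X)} {x : X} {U : Set X}
    (h : ∃ N ∈ A, x ∈ N ∧ N ⊆ U) :
    pickN A x U ∈ A ∧ x ∈ pickN A x U ∧ pickN A x U ⊆ U := by
  rw [pickN]
  rw [dif_pos h]
  exact ⟨h.choose_spec.1, h.choose_spec.2⟩

/-- Bob's simulated play against Alice's PO-strategy. -/
noncomputable def fseq {X : Type*} [TopologicalSpace X] (α : POAliceStrategy X)
    (A : ℕ → Set (Set X)) : ℕ → Set X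
  | n =>
    pickN (A n) (α n (fun i : Fin n => fseq α A i.1)).1
      (α n (fun i : Fin n => fseq α A i.1)).2
  decreasing_by all_goals exact i.2

lemma fseq_congr {X : Type*} [TopologicalSpace X] (α : POAliceStrategy X)
    (A A' : ℕ → Set (Set X)) : ∀ n, (∀ m ≤ n, A m = A' m) → fseq α A n = fseq α A' n := by
  intro n
  induction n using Nat.strong_induction_on with
  | _ n ih =>
    intro hag
    rw [fseq, fseq]
    have : (fun i : Fin n => fseq α A i.1) = fun i : Fin n => fseq α A' i.1 := by
      funext i
      exact ih i.1 i.2 (fun m hm => hag m (le_of_lt (lt_of_le_of_lt hm i.2)))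
    rw [this, hag n le_rfl]

theorem stmt2 {X : Type*} [TopologicalSpace X] [T2Space X]
    (h : POAliceWins X) : RBobWins X := by
  obtain ⟨α, hleg, hwin⟩ := h
  refine ⟨fun n tup => fseq α (fun m => if hm : m < n + 1 then tup ⟨m, hm⟩ else ∅) n, ?_⟩
  intro A hA
  have hσ : ∀ n, fseq α (fun m => if hm : m < n + 1 then A m else ∅) n = fseq α A n := by
    intro n
    apply fseq_congr
    intro m hm
    rw [dif_pos (Nat.lt_succ_of_le hm)]
  have key : ∀ n, fseq α A n ∈ A n ∧
      (α n (fun i : Fin n => fseq α A i.1)).1 ∈ fseq α A n ∧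
      fseq α A n ⊆ (α n (fun i : Fin n => fseq α A i.1)).2 := by
    intro n
    set p := α n (fun i : Fin n => fseq α A i.1) with hp
    have hx : p.1 ∈ p.2 ∧ IsOpen p.2 := hleg n _
    have hex : ∃ N ∈ A n, p.1 ∈ N ∧ N ⊆ p.2 := (hA n).2 p.1 p.2 hx.2 hx.1
    have := pickN_spec hex
    rw [fseq]
    exact this
  constructor
  · intro n
    simp only [hσ]
    exact (key n).1
  · have hnet := hwin (fseq α A) (fun n => ⟨(key n).2.1, (key n).2.2⟩)
    have hfun : (fun n => fseq α (fun m => if hm : m < n + 1 then A m else ∅) n) = fseq α A :=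
      funext hσ
    rw [hfun]
    exact hnet
end

section
/- If Alice has a winning strategy in the R-nw-selective game on a space X, then Bob has a winning strategy in the (Point, Open)-Set game on X. -/
open Set Cardinal TopologicalSpace

open Classical in
/-- Pick an element of `𝒩` between `p.1` and `p.2`, if one exists. -/
noncomputable def chooseN {X : Type*} [TopologicalSpace X] (𝒩 : Set (Set X))
    (p : X × Set X) : Set X :=
  if h : ∃ N ∈ 𝒩, p.1 ∈ N ∧ N ⊆ p.2 then h.choose else ∅

/-- Bob's simulated picks against Alice's R-strategy `α`, responding to the
sequence of point/open pairs `A`. -/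
noncomputable def picks {X : Type*} [TopologicalSpace X] (α : RAliceStrategy X)
    (A : ℕ → X × Set X) : ℕ → Set X
  | n => chooseN (α n (fun i : Fin n => picks α A i.1)) (A n)
  termination_by n => n
  decreasing_by exact i.2

lemma picks_congr {X : Type*} [TopologicalSpace X] (α : RAliceStrategy X)
    (A A' : ℕ → X × Set X) : ∀ n, (∀ m ≤ n, A m = A' m) →
    picks α A n = picks α A' n := by
  intro n
  induction n using Nat.strong_induction_on with
  | _ n ih =>
    intro hAA
    rw [picks, picks]
    have : (fun i : Fin n => picks α A i.1) = fun i : Fin n => picks α A' i.1 := by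
      funext i
      exact ih i.1 i.2 (fun m hm => hAA m (le_of_lt (lt_of_le_of_lt hm i.2)))
    rw [this, hAA n le_rfl]

theorem stmt3 {X : Type*} [TopologicalSpace X] [T2Space X]
    (h : RAliceWins X) : POBobWins X := by
  classical
  obtain ⟨α, hctbl, hwin⟩ := h
  refine ⟨fun n A => picks α (fun m => if hm : m < n + 1 then A ⟨m, hm⟩ else (A 0)) n, ?_⟩
  intro A hA
  have hσ : ∀ n : ℕ, picks α (fun m => if hm : m < n + 1 then A m else A 0) n
      = picks α A n := by
    intro n
    apply picks_congr
    intro m hm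
    simp [Nat.lt_succ_of_le hm]
  have key : ∀ n, picks α A n ∈ α n (fun i : Fin n => picks α A i.1) ∧
      (A n).1 ∈ picks α A n ∧ picks α A n ⊆ (A n).2 := by
    intro n
    have hnet := hctbl n (fun i : Fin n => picks α A i.1)
    have hex : ∃ N ∈ α n (fun i : Fin n => picks α A i.1), (A n).1 ∈ N ∧ N ⊆ (A n).2 :=
      hnet.2 (A n).1 (A n).2 (hA n).2 (hA n).1
    have heq : picks α A n = hex.choose := by
      rw [picks]
      unfold chooseN
      rw [dif_pos hex]
    rw [heq]
    exact ⟨hex.choose_spec.1, hex.choose_spec.2⟩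
  constructor
  · intro n
    dsimp only
    simp only [Fin.val_zero]
    rw [hσ n]
    exact (key n).2
  · dsimp only
    simp only [Fin.val_zero]
    have : (fun n => picks α (fun m => if hm : m < n + 1 then A m else A 0) n)
        = picks α A := funext hσ
    rw [this]
    exact hwin (picks α A) (fun n => (key n).1)
end

section
/- Assume ω₁ < cov(M). For any subspace X of the real line of cardinality ω₁, the R-nw-selective game on X is indeterminate: neither Alice nor Bob has a winning strategy. -/
open Set Cardinal TopologicalSpace

/-! ### Auxiliary development for `stmt6` -/

namespace Stmt6Aux

attribute [local instance] Classical.propDecidable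

variable {X : Set ℝ}

/-- countable family of rational-interval traces on `X`. -/
def ratNet (X : Set ℝ) : Set (Set ↥X) :=
  Set.range (fun q : ℚ × ℚ => (Subtype.val ⁻¹' (Set.Ioo (q.1 : ℝ) (q.2 : ℝ)) : Set ↥X))

lemma ratNet_countable : (ratNet X).Countable := countable_range _

lemma mem_ratNet (q1 q2 : ℚ) :
    (Subtype.val ⁻¹' (Ioo (q1 : ℝ) (q2 : ℝ)) : Set ↥X) ∈ ratNet X := ⟨(q1, q2), rfl⟩

lemma open_refine {U : Set ↥X} (hU : IsOpen U) {x : ↥X} (hx : x ∈ U) :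
    ∃ q1 q2 : ℚ, (x : ℝ) ∈ Ioo (q1 : ℝ) (q2 : ℝ) ∧
      (Subtype.val ⁻¹' (Ioo (q1 : ℝ) (q2 : ℝ)) : Set ↥X) ⊆ U := by
  obtain ⟨W, hW, rfl⟩ := isOpen_induced_iff.mp hU
  obtain ⟨ε, hε, hball⟩ := Metric.isOpen_iff.mp hW _ hx
  obtain ⟨q1, hq1, hq1'⟩ := exists_rat_btwn (show (x : ℝ) - ε < x by linarith)
  obtain ⟨q2, hq2, hq2'⟩ := exists_rat_btwn (show (x : ℝ) < x + ε by linarith)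
  refine ⟨q1, q2, ⟨hq1', hq2⟩, ?_⟩
  intro y hy
  apply hball
  rw [Real.ball_eq_Ioo]
  exact ⟨lt_trans hq1 hy.1, lt_trans hy.2 hq2'⟩

lemma ratNet_isNetwork : IsNetwork (ratNet X) := by
  intro x U hU hx
  obtain ⟨q1, q2, h1, h2⟩ := open_refine hU hx
  exact ⟨_, mem_ratNet q1 q2, h1, h2⟩

lemma Xt_nonempty (hX : Cardinal.mk X = Cardinal.aleph 1) : Nonempty ↥X := by
  rw [← Cardinal.mk_ne_zero_iff]
  rw [hX]
  have := Cardinal.aleph0_lt_aleph_one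
  intro h
  rw [h] at this
  exact absurd this (by simp)

lemma Xt_uncountable (hX : Cardinal.mk X = Cardinal.aleph 1) {s : Set ↥X}
    (hs : s.Countable) : ∃ y : ↥X, y ∉ s := by
  by_contra h
  push_neg at h
  have huniv : (Set.univ : Set ↥X) ⊆ s := fun y _ => h y
  have : (Set.univ : Set ↥X).Countable := hs.mono huniv
  rw [Set.countable_univ_iff] at this
  have h2 : Cardinal.mk ↥X ≤ Cardinal.aleph0 := Cardinal.mk_le_aleph0
  rw [hX] at h2
  exact absurd (lt_of_lt_of_le Cardinal.aleph0_lt_aleph_one h2) (lt_irrefl _)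


/-! ### Interval scheme on the reals -/

noncomputable def child (k : ℕ) (p : ℝ × ℝ) : ℝ × ℝ :=
  (p.1 + (p.2 - p.1) * (1 - (1/2 : ℝ)^k), p.1 + (p.2 - p.1) * (1 - (1/2 : ℝ)^(k+1)))

lemma half_pow_pos (k : ℕ) : (0:ℝ) < (1/2 : ℝ)^k := by positivity
lemma half_pow_le_one (k : ℕ) : ((1/2 : ℝ))^k ≤ 1 :=
  pow_le_one₀ (by norm_num) (by norm_num)

lemma child_lt {p : ℝ × ℝ} (hp : p.1 < p.2) (k : ℕ) :
    (child k p).1 < (child k p).2 := by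
  have h1 : ((1/2:ℝ))^(k+1) < (1/2:ℝ)^k := by
    have := half_pow_pos k
    calc ((1/2:ℝ))^(k+1) = (1/2:ℝ)^k * (1/2) := by ring
    _ < (1/2:ℝ)^k := by linarith
  have hD : (0:ℝ) < p.2 - p.1 := by linarith
  simp only [child]
  nlinarith

lemma child_left_ge {p : ℝ × ℝ} (hp : p.1 ≤ p.2) (k : ℕ) : p.1 ≤ (child k p).1 := by
  have h1 := half_pow_le_one k
  have hD : (0:ℝ) ≤ p.2 - p.1 := by linarith
  simp only [child]
  nlinarith

lemma child_right_le {p : ℝ × ℝ} (hp : p.1 ≤ p.2) (k : ℕ) : (child k p).2 ≤ p.2 := by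
  have h1 := half_pow_pos (k+1)
  have h2 := half_pow_le_one (k+1)
  have hD : (0:ℝ) ≤ p.2 - p.1 := by linarith
  simp only [child]
  nlinarith

lemma child_subset {p : ℝ × ℝ} (hp : p.1 < p.2) (k : ℕ) :
    Ioo (child k p).1 (child k p).2 ⊆ Ioo p.1 p.2 :=
  Ioo_subset_Ioo (child_left_ge (le_of_lt hp) k) (child_right_le (le_of_lt hp) k)

lemma child_len {p : ℝ × ℝ} (k : ℕ) :
    (child k p).2 - (child k p).1 = (p.2 - p.1) * (1/2:ℝ)^(k+1) := by
  simp only [child]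
  ring

lemma child_mono {p : ℝ × ℝ} (hp : p.1 ≤ p.2) {k k' : ℕ} (hkk : k < k') :
    (child k p).2 ≤ (child k' p).1 := by
  have h1 : ((1/2:ℝ))^(k') ≤ (1/2:ℝ)^(k+1) :=
    pow_le_pow_of_le_one (by norm_num) (by norm_num) hkk
  have hD : (0:ℝ) ≤ p.2 - p.1 := by linarith
  simp only [child]
  nlinarith

lemma child_inj {p : ℝ × ℝ} (hp : p.1 < p.2) {r : ℝ} {k k' : ℕ}
    (h1 : r ∈ Ioo (child k p).1 (child k p).2)
    (h2 : r ∈ Ioo (child k' p).1 (child k' p).2) : k = k' := by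
  rcases lt_trichotomy k k' with h | h | h
  · exact absurd (lt_of_lt_of_le h1.2 (child_mono hp.le h)) (not_lt.mpr h2.1.le)
  · exact h
  · exact absurd (lt_of_lt_of_le h2.2 (child_mono hp.le h)) (not_lt.mpr h1.1.le)

lemma exists_child_Ico {p : ℝ × ℝ} (hp : p.1 < p.2) {r : ℝ} (hr : r ∈ Ioo p.1 p.2) :
    ∃ k, (child k p).1 ≤ r ∧ r < (child k p).2 := by
  have hD : (0:ℝ) < p.2 - p.1 := by linarith
  set s : ℝ := (p.2 - r) / (p.2 - p.1) with hs
  have hs0 : 0 < s := div_pos (by linarith [hr.2]) hD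
  have hs1 : s < 1 := (div_lt_one hD).mpr (by linarith [hr.1])
  have hex : ∃ m : ℕ, ((1/2:ℝ))^m < s := exists_pow_lt_of_lt_one hs0 (by norm_num)
  set n0 := Nat.find hex with hn0
  have hfind : ((1/2:ℝ))^n0 < s := Nat.find_spec hex
  have hn0pos : n0 ≠ 0 := by
    intro h
    rw [h] at hfind
    simp at hfind
    linarith
  obtain ⟨k, hk⟩ := Nat.exists_eq_succ_of_ne_zero hn0pos
  have hk1 : ((1/2:ℝ))^(k+1) < s := by
    have : k + 1 = n0 := by omega
    rw [this]; exact hfind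
  have hk2 : s ≤ ((1/2:ℝ))^k := by
    by_contra h
    push_neg at h
    exact absurd h (by simpa using Nat.find_min hex (by omega : k < n0))
  refine ⟨k, ?_, ?_⟩
  · have : p.2 - r ≤ (1/2:ℝ)^k * (p.2 - p.1) := by
      rw [hs, div_le_iff₀ hD] at hk2
      exact hk2
    simp only [child]
    nlinarith
  · have : (1/2:ℝ)^(k+1) * (p.2 - p.1) < p.2 - r := by
      rw [hs, lt_div_iff₀ hD] at hk1
      exact hk1
    simp only [child]
    nlinarith

/-! ### Nodes -/

noncomputable def nodeP (f : ℕ → ℕ) : ℕ → ℝ × ℝ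
  | 0 => (0, 1)
  | n + 1 => child (f n) (nodeP f n)

lemma nodeP_valid (f : ℕ → ℕ) : ∀ n, (nodeP f n).1 < (nodeP f n).2
  | 0 => by norm_num [nodeP]
  | n + 1 => child_lt (nodeP_valid f n) _

lemma nodeP_mem01 (f : ℕ → ℕ) : ∀ n, 0 ≤ (nodeP f n).1 ∧ (nodeP f n).2 ≤ 1
  | 0 => by norm_num [nodeP]
  | n + 1 => by
    have ih := nodeP_mem01 f n
    have h1 := child_left_ge (le_of_lt (nodeP_valid f n)) (f n)
    have h2 := child_right_le (le_of_lt (nodeP_valid f n)) (f n)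
    exact ⟨le_trans ih.1 h1, le_trans h2 ih.2⟩

lemma nodeP_len (f : ℕ → ℕ) : ∀ n, (nodeP f n).2 - (nodeP f n).1 ≤ (1/2:ℝ)^n
  | 0 => by norm_num [nodeP]
  | n + 1 => by
    have ih := nodeP_len f n
    have hlen := child_len (p := nodeP f n) (f n)
    have h2 : ((1/2:ℝ))^(f n + 1) ≤ (1/2:ℝ) := by
      have := pow_le_pow_of_le_one (show (0:ℝ) ≤ 1/2 by norm_num)
        (show (1/2:ℝ) ≤ 1 by norm_num) (show 1 ≤ f n + 1 by omega)
      simpa using this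
    have hD : (0:ℝ) ≤ (nodeP f n).2 - (nodeP f n).1 := le_of_lt (by linarith [nodeP_valid f n])
    show (child (f n) (nodeP f n)).2 - (child (f n) (nodeP f n)).1 ≤ (1/2:ℝ)^(n+1)
    rw [hlen]
    calc ((nodeP f n).2 - (nodeP f n).1) * (1/2:ℝ)^(f n + 1)
        ≤ ((nodeP f n).2 - (nodeP f n).1) * (1/2:ℝ) := by nlinarith
      _ ≤ (1/2:ℝ)^n * (1/2:ℝ) := by nlinarith
      _ = (1/2:ℝ)^(n+1) := by ring

lemma nodeP_agree {f g : ℕ → ℕ} : ∀ n, (∀ i, i < n → f i = g i) → nodeP f n = nodeP g n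
  | 0, _ => rfl
  | n + 1, h => by
    show child (f n) (nodeP f n) = child (g n) (nodeP g n)
    rw [nodeP_agree n (fun i hi => h i (by omega)), h n (by omega)]

lemma nodeP_sub (f : ℕ → ℕ) (n : ℕ) :
    Ioo (nodeP f (n+1)).1 (nodeP f (n+1)).2 ⊆ Ioo (nodeP f n).1 (nodeP f n).2 :=
  child_subset (nodeP_valid f n) _

lemma nodeP_sub_le (f : ℕ → ℕ) {m n : ℕ} (h : m ≤ n) :
    Ioo (nodeP f n).1 (nodeP f n).2 ⊆ Ioo (nodeP f m).1 (nodeP f m).2 := by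
  induction n with
  | zero => simp_all
  | succ n ih =>
    rcases Nat.eq_or_lt_of_le h with h' | h'
    · rw [h']
    · exact (nodeP_sub f n).trans (ih (by omega))

/-! ### Decoder -/

noncomputable def pick (r : ℝ) (p : ℝ × ℝ) : ℕ :=
  if h : ∃ k, r ∈ Ioo (child k p).1 (child k p).2 then h.choose else 0

lemma pick_eq {r : ℝ} {p : ℝ × ℝ} (hp : p.1 < p.2) {k : ℕ}
    (hr : r ∈ Ioo (child k p).1 (child k p).2) : pick r p = k := by
  have hex : ∃ k, r ∈ Ioo (child k p).1 (child k p).2 := ⟨k, hr⟩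
  rw [pick, dif_pos hex]
  exact child_inj hp hex.choose_spec hr

noncomputable def Qnode (r : ℝ) : ℕ → ℝ × ℝ
  | 0 => (0, 1)
  | n + 1 => child (pick r (Qnode r n)) (Qnode r n)

noncomputable def codeOf (r : ℝ) : ℕ → ℕ := fun n => pick r (Qnode r n)

lemma Qnode_eq (r : ℝ) : ∀ n, Qnode r n = nodeP (codeOf r) n
  | 0 => rfl
  | n + 1 => by
    exact congrArg (child (codeOf r n)) (Qnode_eq r n)

lemma follow {r : ℝ} {f : ℕ → ℕ} {n : ℕ}
    (hr : r ∈ Ioo (nodeP f (n+1)).1 (nodeP f (n+1)).2) :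
    ∀ i, i ≤ n → codeOf r i = f i := by
  have aux : ∀ i, i ≤ n + 1 → Qnode r i = nodeP f i := by
    intro i hi
    induction i with
    | zero => rfl
    | succ i ih =>
      have hQ : Qnode r i = nodeP f i := ih (by omega)
      have hri : r ∈ Ioo (nodeP f (i+1)).1 (nodeP f (i+1)).2 :=
        nodeP_sub_le f (by omega) hr
      have hpk : pick r (Qnode r i) = f i := by
        rw [hQ]
        exact pick_eq (nodeP_valid f i) hri
      show child (pick r (Qnode r i)) (Qnode r i) = nodeP f (i+1)
      rw [hpk, hQ]
      rfl
  intro i hi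
  have hQ : Qnode r i = nodeP f i := aux i (by omega)
  have hri : r ∈ Ioo (nodeP f (i+1)).1 (nodeP f (i+1)).2 :=
    nodeP_sub_le f (by omega) hr
  show pick r (Qnode r i) = f i
  rw [hQ]
  exact pick_eq (nodeP_valid f i) hri

/-! ### Endpoints -/

noncomputable def Evts : Set ℝ :=
  ⋃ (n : ℕ), ⋃ (t : Fin n → ℕ),
    {(nodeP (fun i => if h : i < n then t ⟨i, h⟩ else 0) n).1,
     (nodeP (fun i => if h : i < n then t ⟨i, h⟩ else 0) n).2}

lemma Evts_countable : Evts.Countable :=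
  countable_iUnion fun n => countable_iUnion fun t =>
    (countable_singleton _).insert _

lemma endpoint_mem (f : ℕ → ℕ) (n : ℕ) :
    (nodeP f n).1 ∈ Evts ∧ (nodeP f n).2 ∈ Evts := by
  set t : Fin n → ℕ := fun i => f i.1 with ht
  have he : nodeP (fun i => if h : i < n then t ⟨i, h⟩ else 0) n = nodeP f n :=
    nodeP_agree n (fun i hi => by simp [ht, dif_pos hi])
  constructor
  · exact mem_iUnion.mpr ⟨n, mem_iUnion.mpr ⟨t, by rw [he]; exact Or.inl rfl⟩⟩
  · exact mem_iUnion.mpr ⟨n, mem_iUnion.mpr ⟨t, by rw [he]; exact Or.inr rfl⟩⟩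

/-! ### Descending along a generic point -/

lemma descend {r : ℝ} (hr : r ∈ Ioo (0:ℝ) 1) (hE : r ∉ Evts) :
    ∀ n, r ∈ Ioo (Qnode r n).1 (Qnode r n).2 := by
  intro n
  induction n with
  | zero => exact hr
  | succ n ih =>
    have hv : (Qnode r n).1 < (Qnode r n).2 := by
      rw [Qnode_eq]; exact nodeP_valid _ n
    obtain ⟨k, hk1, hk2⟩ := exists_child_Ico hv ih
    have hne : r ≠ (child k (Qnode r n)).1 := by
      intro hcon
      apply hE
      have h1 : child k (Qnode r n) =
          nodeP (Function.update (codeOf r) n k) (n+1) := by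
        show child k (Qnode r n) =
          child (Function.update (codeOf r) n k n) (nodeP (Function.update (codeOf r) n k) n)
        rw [Function.update_self]
        congr 1
        rw [Qnode_eq]
        exact nodeP_agree n (fun i hi => (Function.update_of_ne (by omega) _ _).symm)
      rw [hcon, h1]
      exact (endpoint_mem _ _).1
    have hIoo : r ∈ Ioo (child k (Qnode r n)).1 (child k (Qnode r n)).2 :=
      ⟨lt_of_le_of_ne hk1 (fun h => hne h.symm), hk2⟩
    have hex : ∃ k', r ∈ Ioo (child k' (Qnode r n)).1 (child k' (Qnode r n)).2 := ⟨k, hIoo⟩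
    show r ∈ Ioo (child (pick r (Qnode r n)) (Qnode r n)).1 (child (pick r (Qnode r n)) (Qnode r n)).2
    rw [pick, dif_pos hex]
    exact hex.choose_spec

lemma exists_avoid (s : Set ℝ) (hs : s.Countable) {u v : ℝ} (huv : u < v) :
    ∃ r ∈ Ioo u v, r ∉ s := by
  by_contra h
  push_neg at h
  have hsub : Ioo u v ⊆ s := fun r hr => h r hr
  have hc : (Ioo u v).Countable := hs.mono hsub
  rw [← Set.countable_coe_iff, ← Cardinal.mk_le_aleph0_iff] at hc
  rw [Cardinal.mk_Ioo_real huv] at hc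
  exact absurd (lt_of_lt_of_le Cardinal.aleph0_lt_continuum hc) (lt_irrefl _)

lemma node_in_interval {u v : ℝ} (hu0 : 0 ≤ u) (hv1 : v ≤ 1) (huv : u < v) :
    ∃ (f : ℕ → ℕ) (n : ℕ), Ioo (nodeP f n).1 (nodeP f n).2 ⊆ Ioo u v := by
  obtain ⟨r, hruv, hrE⟩ := exists_avoid Evts Evts_countable huv
  have hr01 : r ∈ Ioo (0:ℝ) 1 := ⟨lt_of_le_of_lt hu0 hruv.1, lt_of_lt_of_le hruv.2 hv1⟩
  have hd := descend hr01 hrE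
  have hmin : (0:ℝ) < min (r - u) (v - r) := by
    simp only [lt_min_iff]
    constructor <;> [linarith [hruv.1]; linarith [hruv.2]]
  obtain ⟨n, hn⟩ := exists_pow_lt_of_lt_one hmin (show (1/2:ℝ) < 1 by norm_num)
  refine ⟨codeOf r, n, ?_⟩
  have hQ : Qnode r n = nodeP (codeOf r) n := Qnode_eq r n
  have hrn := hd n
  rw [hQ] at hrn
  have hlen := nodeP_len (codeOf r) n
  intro z hz
  have h1 : (nodeP (codeOf r) n).1 > r - (1/2:ℝ)^n := by
    have : (nodeP (codeOf r) n).2 > r := hrn.2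
    linarith
  have h2 : (nodeP (codeOf r) n).2 < r + (1/2:ℝ)^n := by
    have : (nodeP (codeOf r) n).1 < r := hrn.1
    linarith
  have hmin1 : (1/2:ℝ)^n < r - u := lt_of_lt_of_le hn (min_le_left _ _)
  have hmin2 : (1/2:ℝ)^n < v - r := lt_of_lt_of_le hn (min_le_right _ _)
  constructor
  · linarith [hz.1]
  · linarith [hz.2]


lemma nodeP_succ (f : ℕ → ℕ) (n : ℕ) : nodeP f (n+1) = child (f n) (nodeP f n) := rfl

variable {X : Set ℝ}

section Alice

lemma net_nonempty (hne : Nonempty ↥X) {𝒜 : Set (Set ↥X)} (h : 𝒜 ∈ CtblNetwork ↥X) :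
    𝒜.Nonempty := by
  obtain ⟨x⟩ := hne
  obtain ⟨N, hN, -, -⟩ := h.2 x Set.univ isOpen_univ trivial
  exact ⟨N, hN⟩

variable (α : RAliceStrategy ↥X) (hα : ∀ n h, α n h ∈ CtblNetwork ↥X) (hne : Nonempty ↥X)

/-- enumeration of the countable network `α n h`. -/
noncomputable def chE (n : ℕ) (h : Fin n → Set ↥X) : ℕ → Set ↥X :=
  ((hα n h).1.exists_eq_range (net_nonempty hne (hα n h))).choose

lemma chE_spec (n : ℕ) (h : Fin n → Set ↥X) : α n h = Set.range (chE α hα hne n h) :=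
  ((hα n h).1.exists_eq_range (net_nonempty hne (hα n h))).choose_spec

/-- Bob's moves along code `g`. -/
noncomputable def Vh (g : ℕ → ℕ) : (n : ℕ) → (Fin n → Set ↥X)
  | 0 => fun i => i.elim0
  | n + 1 => Fin.snoc (Vh g n) (chE α hα hne n (Vh g n) (g n))

noncomputable def bplay (g : ℕ → ℕ) (n : ℕ) : Set ↥X :=
  chE α hα hne n (Vh α hα hne g n) (g n)

lemma Vh_agree {g g' : ℕ → ℕ} : ∀ n, (∀ i, i < n → g i = g' i) →
    Vh α hα hne g n = Vh α hα hne g' n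
  | 0, _ => by funext i; exact i.elim0
  | n + 1, h => by
    show (Fin.snoc (Vh α hα hne g n) (chE α hα hne n (Vh α hα hne g n) (g n)) : Fin (n+1) → Set ↥X) =
      Fin.snoc (Vh α hα hne g' n) (chE α hα hne n (Vh α hα hne g' n) (g' n))
    rw [Vh_agree n (fun i hi => h i (by omega)), h n (by omega)]

lemma bplay_agree {g g' : ℕ → ℕ} (n : ℕ) (h : ∀ i, i ≤ n → g i = g' i) :
    bplay α hα hne g n = bplay α hα hne g' n := by
  unfold bplay
  rw [Vh_agree α hα hne n (fun i hi => h i (by omega)), h n (by omega)]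

lemma Vh_eq (g : ℕ → ℕ) : ∀ n, Vh α hα hne g n = fun i : Fin n => bplay α hα hne g i.1 := by
  intro n
  induction n with
  | zero => funext i; exact i.elim0
  | succ n ih =>
    funext i
    refine Fin.lastCases ?_ ?_ i
    · show (Fin.snoc (Vh α hα hne g n) (chE α hα hne n (Vh α hα hne g n) (g n)) : Fin (n+1) → Set ↥X) (Fin.last n) = _
      rw [Fin.snoc_last]
      show chE α hα hne n (Vh α hα hne g n) (g n) = bplay α hα hne g n
      rfl
    · intro j
      show (Fin.snoc (Vh α hα hne g n) (chE α hα hne n (Vh α hα hne g n) (g n)) : Fin (n+1) → Set ↥X) j.castSucc = _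
      rw [Fin.snoc_castSucc, ih]
      simp

lemma bplay_mem (g : ℕ → ℕ) (n : ℕ) :
    bplay α hα hne g n ∈ α n (Vh α hα hne g n) := by
  rw [chE_spec α hα hne n (Vh α hα hne g n)]
  exact ⟨g n, rfl⟩

/-- capture of the pair `(x, Ioo q1 q2)` at inning `n` along code `g`. -/
def Capt (x : ↥X) (q1 q2 : ℚ) (g : ℕ → ℕ) (n : ℕ) : Prop :=
  x ∈ bplay α hα hne g n ∧
    bplay α hα hne g n ⊆ (Subtype.val ⁻¹' (Ioo (q1 : ℝ) (q2 : ℝ)) : Set ↥X)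

noncomputable def GoodSet (x : ↥X) (q1 q2 : ℚ) : Set ℝ :=
  ⋃ (m : ℤ) (g : ℕ → ℕ) (n : ℕ) (_ : Capt α hα hne x q1 q2 g n),
    Ioo ((m : ℝ) + (nodeP g (n+1)).1) ((m : ℝ) + (nodeP g (n+1)).2)

lemma GoodSet_open (x : ↥X) (q1 q2 : ℚ) : IsOpen (GoodSet α hα hne x q1 q2) :=
  isOpen_iUnion fun _ => isOpen_iUnion fun _ => isOpen_iUnion fun _ =>
    isOpen_iUnion fun _ => isOpen_Ioo

lemma GoodSet_dense (x : ↥X) (q1 q2 : ℚ) (hx : (x : ℝ) ∈ Ioo (q1 : ℝ) (q2 : ℝ)) :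
    Dense (GoodSet α hα hne x q1 q2) := by
  rw [dense_iff_inter_open]
  rintro U hU ⟨w, hw⟩
  obtain ⟨ε, hε, hball⟩ := Metric.isOpen_iff.mp hU w hw
  rw [Real.ball_eq_Ioo] at hball
  -- pick a non-integer point in the ball
  obtain ⟨w', hw', hwZ⟩ := exists_avoid (Set.range (fun m : ℤ => (m : ℝ)))
    (Set.countable_range _) (show w - ε < w + ε by linarith)
  set m : ℤ := ⌊w'⌋ with hm
  have hmlt : (m : ℝ) < w' := by
    rcases lt_or_eq_of_le (Int.floor_le w') with h | h
    · exact h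
    · exact absurd ⟨m, h⟩ hwZ
  have hlt1 : w' < (m : ℝ) + 1 := Int.lt_floor_add_one w'
  set u : ℝ := max (w - ε) (m : ℝ) with hu
  set v : ℝ := min (w + ε) ((m : ℝ) + 1) with hv
  have huw : u < w' := max_lt hw'.1 hmlt
  have hwv : w' < v := lt_min hw'.2 hlt1
  have hsub : Ioo u v ⊆ Ioo (w - ε) (w + ε) :=
    Ioo_subset_Ioo (le_max_left _ _) (min_le_left _ _)
  have hsubm : Ioo u v ⊆ Ioo (m : ℝ) ((m : ℝ) + 1) :=
    Ioo_subset_Ioo (le_max_right _ _) (min_le_right _ _)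
  -- shift to (0,1)
  have h0 : (0 : ℝ) ≤ u - m := by simp [hu]
  have h1 : v - m ≤ 1 := by simp [hv]; right; linarith
  obtain ⟨f, n, hnode⟩ := node_in_interval h0 h1 (by linarith : u - (m:ℝ) < v - m)
  -- find a witness in Alice's next network
  have hUopen : IsOpen (Subtype.val ⁻¹' (Ioo (q1 : ℝ) (q2 : ℝ)) : Set ↥X) :=
    isOpen_Ioo.preimage continuous_subtype_val
  obtain ⟨N, hN, hxN, hNU⟩ := (hα n (Vh α hα hne f n)).2 x _ hUopen hx
  rw [chE_spec α hα hne n (Vh α hα hne f n)] at hN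
  obtain ⟨k, hk⟩ := hN
  set g : ℕ → ℕ := Function.update f n k with hg
  have hVg : Vh α hα hne g n = Vh α hα hne f n :=
    Vh_agree α hα hne n (fun i hi => Function.update_of_ne (by omega) _ _)
  have hbg : bplay α hα hne g n = N := by
    unfold bplay
    rw [hVg, hg, Function.update_self]
    exact hk
  have hCapt : Capt α hα hne x q1 q2 g n := by
    rw [Capt, hbg]; exact ⟨hxN, hNU⟩
  have hnodeg : nodeP g (n+1) = child k (nodeP f n) := by
    rw [nodeP_succ]
    congr 1
    · rw [hg]; exact Function.update_self _ _ _
    · exact nodeP_agree n (fun i hi => Function.update_of_ne (by omega) _ _)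
  have hPn : nodeP g n = nodeP f n :=
    nodeP_agree n (fun i hi => Function.update_of_ne (by omega) _ _)
  have hsubn : Ioo (nodeP g (n+1)).1 (nodeP g (n+1)).2 ⊆ Ioo (u - m) (v - m) := by
    intro z hz
    have h' := nodeP_sub g n hz
    rw [hPn] at h'
    exact hnode h'
  have hval := nodeP_valid g (n+1)
  -- the witness point
  set z : ℝ := ((nodeP g (n+1)).1 + (nodeP g (n+1)).2) / 2 with hz
  have hzmem : z ∈ Ioo (nodeP g (n+1)).1 (nodeP g (n+1)).2 := ⟨by linarith, by linarith⟩
  have hzuv : z ∈ Ioo (u - m) (v - m) := hsubn hzmem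
  refine ⟨(m : ℝ) + z, ?_, ?_⟩
  · apply hball
    apply hsub
    constructor
    · have := hzuv.1; linarith
    · have := hzuv.2; linarith
  · refine mem_iUnion.mpr ⟨m, mem_iUnion.mpr ⟨g, mem_iUnion.mpr ⟨n, mem_iUnion.mpr ⟨hCapt, ?_⟩⟩⟩⟩
    exact ⟨by linarith [hzmem.1], by linarith [hzmem.2]⟩

lemma BadSet_meagre (x : ↥X) (q1 q2 : ℚ) (hx : (x : ℝ) ∈ Ioo (q1 : ℝ) (q2 : ℝ)) :
    IsMeagre (GoodSet α hα hne x q1 q2)ᶜ := by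
  show (GoodSet α hα hne x q1 q2)ᶜᶜ ∈ residual ℝ
  rw [compl_compl]
  exact residual_of_dense_open (GoodSet_open α hα hne x q1 q2)
    (GoodSet_dense α hα hne x q1 q2 hx)

end Alice

theorem notRAliceWins (hcov : Cardinal.aleph 1 < covMeager)
    (hX : Cardinal.mk X = Cardinal.aleph 1) (hne : Nonempty ↥X) : ¬ RAliceWins ↥X := by
  rintro ⟨α, hα, hbeat⟩
  -- the family of bad sets
  set PPt := {p : ↥X × ℚ × ℚ // (p.1 : ℝ) ∈ Ioo ((p.2.1 : ℚ) : ℝ) ((p.2.2 : ℚ) : ℝ)} with hPP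
  set S : Set (Set ℝ) :=
    Set.range (fun p : PPt => (GoodSet α hα hne p.1.1 p.1.2.1 p.1.2.2)ᶜ) with hS
  have hSmeag : ∀ A ∈ S, IsMeagre A := by
    rintro A ⟨p, rfl⟩
    exact BadSet_meagre α hα hne p.1.1 p.1.2.1 p.1.2.2 p.2
  have hScard : Cardinal.mk S ≤ Cardinal.aleph 1 := by
    refine le_trans Cardinal.mk_range_le ?_
    refine le_trans (Cardinal.mk_subtype_le _) ?_
    have h1 : Cardinal.mk (↥X × ℚ × ℚ) = Cardinal.mk ↥X * Cardinal.mk (ℚ × ℚ) := by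
      simpa using Cardinal.mk_prod ↥X (ℚ × ℚ)
    rw [h1, hX]
    calc Cardinal.aleph 1 * Cardinal.mk (ℚ × ℚ)
        ≤ Cardinal.aleph 1 * Cardinal.aleph 1 := by
          refine mul_le_mul' le_rfl ?_
          exact le_trans Cardinal.mk_le_aleph0 (Cardinal.aleph0_le_aleph 1)
      _ = Cardinal.aleph 1 := Cardinal.mul_eq_self (Cardinal.aleph0_le_aleph 1)
  have hnotuniv : ⋃₀ S ≠ Set.univ := by
    intro h
    have : covMeager ≤ Cardinal.mk S := csInf_le' ⟨S, hSmeag, h, rfl⟩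
    exact absurd (lt_of_le_of_lt (le_trans this hScard) hcov) (lt_irrefl _)
  obtain ⟨r, -, hr⟩ : ∃ r, r ∈ Set.univ ∧ r ∉ ⋃₀ S := by
    by_contra h
    push_neg at h
    exact hnotuniv (Set.eq_univ_iff_forall.mpr fun r => h r trivial)
  -- the good play
  set rr : ℝ := r - (⌊r⌋ : ℝ) with hrr
  set gg : ℕ → ℕ := codeOf rr with hgg
  set b : ℕ → Set ↥X := bplay α hα hne gg with hb
  have hleg : ∀ n, b n ∈ α n (fun i : Fin n => b i.1) := by
    intro n
    rw [show (fun i : Fin n => b i.1) = Vh α hα hne gg n from (Vh_eq α hα hne gg n).symm]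
    exact bplay_mem α hα hne gg n
  apply hbeat b hleg
  intro y U hU hy
  obtain ⟨q1, q2, hy2, hsubU⟩ := open_refine hU hy
  have hrGood : r ∈ GoodSet α hα hne y q1 q2 := by
    by_contra h
    exact hr ⟨_, ⟨⟨(y, q1, q2), hy2⟩, rfl⟩, h⟩
  obtain ⟨m, hm⟩ := mem_iUnion.mp hrGood
  obtain ⟨g, hg⟩ := mem_iUnion.mp hm
  obtain ⟨n, hn⟩ := mem_iUnion.mp hg
  obtain ⟨hCapt, hrmem⟩ := mem_iUnion.mp hn
  -- identify the floor
  have h01 := nodeP_mem01 g (n+1)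
  have hval := nodeP_valid g (n+1)
  have hfl : ⌊r⌋ = m := by
    rw [Int.floor_eq_iff]
    constructor
    · linarith [hrmem.1, h01.1]
    · push_cast
      linarith [hrmem.2, h01.2]
  have hrrmem : rr ∈ Ioo (nodeP g (n+1)).1 (nodeP g (n+1)).2 := by
    rw [hrr, hfl]
    exact ⟨by linarith [hrmem.1], by linarith [hrmem.2]⟩
  have hcode : ∀ i, i ≤ n → gg i = g i := follow hrrmem
  have hbeq : b n = bplay α hα hne g n := bplay_agree α hα hne n hcode
  refine ⟨b n, ⟨n, rfl⟩, ?_, ?_⟩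
  · rw [hbeq]; exact hCapt.1
  · rw [hbeq]; exact fun z hz => hsubU (hCapt.2 hz)

section Bob

variable {X : Set ℝ}

/-- the poisoned network `A_x`. -/
def Anet (x : ↥X) : Set (Set ↥X) := {N ∈ ratNet X | x ∉ N} ∪ {({x} : Set ↥X)}

lemma Anet_mem (x : ↥X) : Anet x ∈ CtblNetwork ↥X := by
  constructor
  · exact (ratNet_countable.mono (sep_subset _ _)).union (countable_singleton _)
  · intro y U hU hy
    by_cases hxy : y = x
    · subst hxy
      exact ⟨{y}, Or.inr rfl, rfl, singleton_subset_iff.mpr hy⟩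
    · have hU' : IsOpen (U ∩ ({x} : Set ↥X)ᶜ) := hU.inter isOpen_compl_singleton
      have hy' : y ∈ U ∩ ({x} : Set ↥X)ᶜ := ⟨hy, by simpa using hxy⟩
      obtain ⟨q1, q2, h1, h2⟩ := open_refine hU' hy'
      refine ⟨_, Or.inl ⟨mem_ratNet q1 q2, fun hxN => (h2 hxN).2 rfl⟩, h1,
        fun z hz => (h2 hz).1⟩

variable (σ : RBobStrategy ↥X) (y0 : ↥X)

/-- Bob's response when Alice extends history `h` by playing `Anet x`. -/
noncomputable def respF (n : ℕ) (h : Fin n → ↥X) (x : ↥X) : Set ↥X :=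
  σ n (fun i : Fin (n + 1) => Anet ((Fin.snoc h x : Fin (n+1) → ↥X) i))

lemma respF_mem (hσ : RBobWinning σ) (n : ℕ) (h : Fin n → ↥X) (x : ↥X) :
    respF σ n h x ∈ Anet x := by
  classical
  set g : ℕ → ↥X := fun i => if hi : i < n then h ⟨i, hi⟩ else x with hg
  have key : ∀ i : Fin (n + 1), g i.1 = (Fin.snoc h x : Fin (n+1) → ↥X) i := by
    intro i
    refine Fin.lastCases ?_ ?_ i
    · simp [hg, Fin.snoc_last]
    · intro j
      simp [hg, Fin.snoc_castSucc, j.2]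
  have H := (hσ (fun i => Anet (g i)) (fun _ => Anet_mem _)).1 n
  have e1 : (fun i : Fin (n + 1) => Anet (g i.1)) =
      (fun i : Fin (n + 1) => Anet ((Fin.snoc h x : Fin (n+1) → ↥X) i)) := by
    funext i; rw [key i]
  have e2 : g n = x := by simp [hg]
  rw [show (fun i : Fin (n+1) => (fun k => Anet (g k)) i.1) = (fun i : Fin (n+1) => Anet (g i.1)) from rfl, e1, e2] at H
  exact H

/-- representative of a point with singleton response. -/
noncomputable def singRep (n : ℕ) (h : Fin n → ↥X) : ↥X :=
  if hs : ∃ x : ↥X, respF σ n h x = {x} then hs.choose else y0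

/-- representative realizing response `N`. -/
noncomputable def repOf (n : ℕ) (h : Fin n → ↥X) (N : Set ↥X) : ↥X :=
  if hs : ∃ x : ↥X, respF σ n h x = N then hs.choose else y0

noncomputable def RepSet (n : ℕ) (h : Fin n → ↥X) : Set ↥X :=
  {singRep σ y0 n h} ∪ (repOf σ y0 n h) '' (ratNet X)

lemma RepSet_countable (n : ℕ) (h : Fin n → ↥X) : (RepSet σ y0 n h).Countable :=
  (countable_singleton _).union (ratNet_countable.image _)

noncomputable def TT : (n : ℕ) → Set (Fin n → ↥X)
  | 0 => {fun i => i.elim0}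
  | n + 1 => ⋃ h ∈ TT n, (Fin.snoc h) '' (RepSet σ y0 n h)

lemma TT_countable : ∀ n, (TT σ y0 n).Countable
  | 0 => countable_singleton _
  | n + 1 => Set.Countable.biUnion (TT_countable n)
      (fun h _ => (RepSet_countable σ y0 n h).image _)

noncomputable def SingSet : Set ↥X := ⋃ n, (singRep σ y0 n) '' (TT σ y0 n)

lemma SingSet_countable : (SingSet σ y0).Countable :=
  countable_iUnion fun n => (TT_countable σ y0 n).image _

variable (y1 : ↥X)

noncomputable def mv (n : ℕ) (h : Fin n → ↥X) : ↥X :=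
  if _hs : ∃ x : ↥X, respF σ n h x = {x} then singRep σ y0 n h
  else repOf σ y0 n h (respF σ n h y1)

noncomputable def WB : (n : ℕ) → (Fin n → ↥X)
  | 0 => fun i => i.elim0
  | n + 1 => Fin.snoc (WB n) (mv σ y0 y1 n (WB n))

noncomputable def fB (n : ℕ) : ↥X := mv σ y0 y1 n (WB σ y0 y1 n)

lemma WB_eq : ∀ n, WB σ y0 y1 n = fun i : Fin n => fB σ y0 y1 i.1 := by
  intro n
  induction n with
  | zero => funext i; exact i.elim0
  | succ n ih =>
    funext i
    refine Fin.lastCases ?_ ?_ i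
    · show (Fin.snoc (WB σ y0 y1 n) (mv σ y0 y1 n (WB σ y0 y1 n)) : Fin (n+1) → ↥X) (Fin.last n) = _
      rw [Fin.snoc_last]
      rfl
    · intro j
      show (Fin.snoc (WB σ y0 y1 n) (mv σ y0 y1 n (WB σ y0 y1 n)) : Fin (n+1) → ↥X) j.castSucc = _
      rw [Fin.snoc_castSucc, ih]
      simp

lemma WB_mem_TT (hσ : RBobWinning σ) : ∀ n, WB σ y0 y1 n ∈ TT σ y0 n := by
  intro n
  induction n with
  | zero => exact rfl
  | succ n ih =>
    refine Set.mem_biUnion ih ?_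
    refine Set.mem_image_of_mem _ ?_
    unfold mv
    split
    · exact Or.inl rfl
    · rename_i hs
      have hmem := respF_mem σ hσ n (WB σ y0 y1 n) y1
      have hns : respF σ n (WB σ y0 y1 n) y1 ≠ {y1} := fun hc => hs ⟨y1, hc⟩
      rcases hmem with hmem | hmem
      · exact Or.inr ⟨_, hmem.1, rfl⟩
      · exact absurd hmem hns

lemma key_exclusion (hσ : RBobWinning σ) (hy1 : y1 ∉ SingSet σ y0) :
    ∀ n, y1 ∉ respF σ n (WB σ y0 y1 n) (fB σ y0 y1 n) := by
  intro n
  unfold fB mv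
  split
  · rename_i hs
    have hrep : singRep σ y0 n (WB σ y0 y1 n) = hs.choose := by
      unfold singRep; rw [dif_pos hs]
    rw [hrep, hs.choose_spec]
    intro hy
    apply hy1
    refine Set.mem_iUnion.mpr ⟨n, ?_⟩
    refine ⟨WB σ y0 y1 n, WB_mem_TT σ y0 y1 hσ n, ?_⟩
    rw [hrep]
    exact (Set.eq_of_mem_singleton hy).symm
  · rename_i hs
    set N := respF σ n (WB σ y0 y1 n) y1 with hN
    have hex : ∃ x : ↥X, respF σ n (WB σ y0 y1 n) x = N := ⟨y1, rfl⟩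
    have hrep : repOf σ y0 n (WB σ y0 y1 n) N = hex.choose := by
      unfold repOf; rw [dif_pos hex]
    rw [hrep, hex.choose_spec]
    have hmem := respF_mem σ hσ n (WB σ y0 y1 n) y1
    rcases hmem with hmem | hmem
    · exact hmem.2
    · exact absurd hmem (fun hc => hs ⟨y1, hc⟩)


theorem notRBobWins (hunc : ∀ {s : Set ↥X}, s.Countable → ∃ y : ↥X, y ∉ s)
    (hne : Nonempty ↥X) : ¬ RBobWins ↥X := by
  rintro ⟨σ, hσ⟩
  obtain ⟨y0⟩ := hne
  obtain ⟨y1, hy1⟩ := hunc (SingSet_countable σ y0)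
  set f : ℕ → ↥X := fB σ y0 y1 with hf
  have H := hσ (fun n => Anet (f n)) (fun _ => Anet_mem _)
  obtain ⟨N, ⟨n, rfl⟩, hy1N, -⟩ := H.2 y1 Set.univ isOpen_univ trivial
  have hEq : σ n (fun i : Fin (n + 1) => (fun k => Anet (f k)) i.1) =
      respF σ n (WB σ y0 y1 n) (fB σ y0 y1 n) := by
    show σ n (fun i : Fin (n + 1) => Anet (f i.1)) =
      σ n (fun i : Fin (n + 1) => Anet ((Fin.snoc (WB σ y0 y1 n) (fB σ y0 y1 n) : Fin (n+1) → ↥X) i))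
    congr 1
    funext i
    congr 1
    have : (Fin.snoc (WB σ y0 y1 n) (fB σ y0 y1 n) : Fin (n+1) → ↥X) = WB σ y0 y1 (n + 1) := rfl
    rw [this, WB_eq]
  have hy1N' : y1 ∈ σ n fun i : Fin (n+1) => (fun k => Anet (f k)) i.1 := hy1N
  rw [hEq] at hy1N'
  exact key_exclusion σ y0 y1 hσ hy1 n hy1N'


end Bob

end Stmt6Aux

theorem stmt6 (hcov : Cardinal.aleph 1 < covMeager) (X : Set ℝ)
    (hX : Cardinal.mk X = Cardinal.aleph 1) :
    ¬ RAliceWins X ∧ ¬ RBobWins X := by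
  have hne := Stmt6Aux.Xt_nonempty hX
  exact ⟨Stmt6Aux.notRAliceWins hcov hX hne,
    Stmt6Aux.notRBobWins (fun {s} hs => Stmt6Aux.Xt_uncountable hX hs) hne⟩
end

section
/- Assume Martin's Axiom holds for all cardinals below the dominating number 𝔡. Let X be a Hausdorff space with countable network weight. If |X| < 𝔡 and w(X) < 𝔡, then Alice does not have a winning strategy in the M-nw-selective game on X. -/
open Set Cardinal TopologicalSpace

/-! ### Auxiliary machinery -/

section AuxMachinery

open Function

universe v

/-- Finsets contained in a countable set form a countable collection. -/
lemma aux_countable_finsets {β : Type v} {s : Set β} (hs : s.Countable) :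
    {F : Finset β | ↑F ⊆ s}.Countable := by
  have h1 : {t : Set β | Set.Finite t ∧ t ⊆ s}.Countable := Set.countable_setOf_finite_subset hs
  have h2 : {F : Finset β | ↑F ⊆ s} =
      (fun F : Finset β => (↑F : Set β)) ⁻¹' {t : Set β | Set.Finite t ∧ t ⊆ s} := by
    ext F; simp [Finset.finite_toSet]
  rw [h2]
  exact h1.preimage (fun F G h => Finset.coe_injective h)

/-- The dominating number is uncountable. -/
lemma aux_aleph0_lt_domNumber : (Cardinal.aleph0 : Cardinal) < domNumber := by
  have hne : { c | ∃ D : Set (ℕ → ℕ),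
      (∀ g : ℕ → ℕ, ∃ f ∈ D, ∀ᶠ n in Filter.atTop, g n ≤ f n) ∧ Cardinal.mk D = c }.Nonempty :=
    ⟨_, Set.univ, fun g => ⟨g, Set.mem_univ g, Filter.Eventually.of_forall fun n => le_rfl⟩, rfl⟩
  have hmem := csInf_mem hne
  obtain ⟨D, hD, hDeq⟩ := hmem
  show (Cardinal.aleph0 : Cardinal) < sInf _
  rw [← hDeq]
  by_contra hle
  push_neg at hle
  have hcount : D.Countable := by
    rw [← Set.countable_coe_iff] at *
    exact Cardinal.mk_le_aleph0_iff.mp hle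
  have hDne : D.Nonempty := by
    obtain ⟨f, hf, -⟩ := hD 0
    exact ⟨f, hf⟩
  obtain ⟨e, he⟩ := hcount.exists_eq_range hDne
  obtain ⟨f, hfD, hfev⟩ := hD (fun n => (Finset.range (n + 1)).sup (fun k => e k n) + 1)
  rw [he] at hfD
  obtain ⟨k, rfl⟩ := hfD
  rw [Filter.eventually_atTop] at hfev
  obtain ⟨N, hN⟩ := hfev
  have h1 : (Finset.range (max N k + 1)).sup (fun j => e j (max N k)) + 1 ≤ e k (max N k) :=
    hN _ (le_max_left _ _)
  have h2 : e k (max N k) ≤ (Finset.range (max N k + 1)).sup (fun j => e j (max N k)) :=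
    Finset.le_sup (f := fun j => e j (max N k))
      (Finset.mem_range.mpr (Nat.lt_succ_of_le (le_max_right N k)))
  omega

/-- A `Type 0` copy of a poset possessing a surjection from `ℕ`. -/
structure MAWrap {P : Type v} (g : ℕ → P) : Type where
  n : ℕ

instance MAWrap.instPreorder {P : Type v} [Preorder P] (g : ℕ → P) : Preorder (MAWrap g) where
  le a b := g a.n ≤ g b.n
  le_refl a := le_refl _
  le_trans a b c hab hbc := le_trans hab hbc

instance MAWrap.instCountable {P : Type v} (g : ℕ → P) : Countable (MAWrap g) :=
  Function.Injective.countable (f := fun w : MAWrap g => w.n)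
    (fun a b h => by cases a; cases b; simpa using h)

/-- Transfer Martin's Axiom to a countable poset in an arbitrary universe. -/
lemma aux_ma_transfer {c : Cardinal} (hMA : MartinsAxiomBelow c) {P : Type v} [Preorder P]
    (g : ℕ → P) (hg : Function.Surjective g)
    (𝒟 : Set (Set P)) (hd : ∀ D ∈ 𝒟, PosetDense D)
    (hc : Cardinal.mk 𝒟 < Cardinal.lift.{v} c) :
    ∃ F : Set P, PosetFilter F ∧ ∀ D ∈ 𝒟, (F ∩ D).Nonempty := by
  classical
  set h : MAWrap g → P := fun w => g w.n with hh
  have hhsurj : Function.Surjective h := by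
    intro p
    obtain ⟨n, hn⟩ := hg p
    exact ⟨⟨n⟩, hn⟩
  have hccc : PosetCCC (MAWrap g) := fun A _ => A.to_countable
  have hdense : ∀ D' ∈ (fun D : Set P => h ⁻¹' D) '' 𝒟, PosetDense D' := by
    rintro _ ⟨D, hD, rfl⟩ w
    obtain ⟨q, hqD, hq⟩ := hd D hD (h w)
    obtain ⟨w', hw'⟩ := hhsurj q
    refine ⟨w', ?_, ?_⟩
    · show h w' ∈ D
      rw [hw']; exact hqD
    · show h w' ≤ h w
      rw [hw']; exact hq
  have hcard' : Cardinal.mk ((fun D : Set P => h ⁻¹' D) '' 𝒟) < c := by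
    have h1 : Cardinal.lift.{v} (Cardinal.mk ((fun D : Set P => h ⁻¹' D) '' 𝒟))
        ≤ Cardinal.lift.{0} (Cardinal.mk 𝒟) := Cardinal.mk_image_le_lift
    rw [Cardinal.lift_uzero] at h1
    exact (Cardinal.lift_lt).mp (lt_of_le_of_lt h1 hc)
  obtain ⟨F', hF', hmeet'⟩ := hMA (MAWrap g) ⟨⟨0⟩⟩ hccc _ hdense hcard'
  refine ⟨h '' F', ⟨hF'.1.image h, ?_, ?_⟩, ?_⟩
  · rintro _ ⟨w, hw, rfl⟩ q hq
    obtain ⟨w', hw'⟩ := hhsurj q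
    refine ⟨w', hF'.2.1 w hw w' ?_, hw'⟩
    show h w ≤ h w'
    rw [hw']; exact hq
  · rintro _ ⟨w, hw, rfl⟩ _ ⟨v, hv, rfl⟩
    obtain ⟨r, hrF, hrw, hrv⟩ := hF'.2.2 w hw v hv
    exact ⟨h r, ⟨r, hrF, rfl⟩, hrw, hrv⟩
  · intro D hD
    obtain ⟨w, hwF, hwD⟩ := hmeet' (h ⁻¹' D) ⟨D, hD, rfl⟩
    exact ⟨h w, ⟨w, hwF, rfl⟩, hwD⟩

end AuxMachinery

section AuxGame

universe w

variable {X : Type w} [TopologicalSpace X]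

/-- Legality of a finite play (of length `n`, padded with `∅`) against Alice's strategy. -/
def AuxLegal (α : MAliceStrategy X) (n : ℕ) (f : ℕ → Finset (Set X)) : Prop :=
  (∀ i, i < n → ↑(f i) ⊆ α i (fun j : Fin i => f j)) ∧ ∀ i, n ≤ i → f i = ∅

/-- The poset of finite legal plays against Alice's strategy `α`. -/
def AuxCond (α : MAliceStrategy X) : Type w :=
  {c : ℕ × (ℕ → Finset (Set X)) // AuxLegal α c.1 c.2}

instance AuxCond.instPreorder (α : MAliceStrategy X) : Preorder (AuxCond α) where
  le c d := d.1.1 ≤ c.1.1 ∧ ∀ i, i < d.1.1 → c.1.2 i = d.1.2 i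
  le_refl c := ⟨le_rfl, fun _ _ => rfl⟩
  le_trans a b c hab hbc :=
    ⟨hbc.1.trans hab.1, fun i hi => (hab.2 i (lt_of_lt_of_le hi hbc.1)).trans (hbc.2 i hi)⟩

lemma auxCond_le_iff (α : MAliceStrategy X) (c d : AuxCond α) :
    c ≤ d ↔ d.1.1 ≤ c.1.1 ∧ ∀ i, i < d.1.1 → c.1.2 i = d.1.2 i := Iff.rfl

instance AuxCond.instNonempty (α : MAliceStrategy X) : Nonempty (AuxCond α) :=
  ⟨⟨(0, fun _ => ∅), ⟨fun i hi => absurd hi (Nat.not_lt_zero i), fun _ _ => rfl⟩⟩⟩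

/-- One-step extension of a legal play by a legal finite choice. -/
lemma auxCond_extend (α : MAliceStrategy X) (c : AuxCond α) (F : Finset (Set X))
    (hF : ↑F ⊆ α c.1.1 (fun j : Fin c.1.1 => c.1.2 j)) :
    ∃ d : AuxCond α, d ≤ c ∧ d.1.1 = c.1.1 + 1 ∧ d.1.2 c.1.1 = F := by
  classical
  obtain ⟨⟨n, f⟩, hleg⟩ := c
  refine ⟨⟨(n + 1, Function.update f n F), ⟨?_, ?_⟩⟩, ⟨?_, ?_⟩, rfl, Function.update_self _ _ _⟩
  · intro i hi
    have hi' : i < n + 1 := hi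
    show ↑(Function.update f n F i) ⊆ α i fun j : Fin i => Function.update f n F ↑j
    rcases Nat.lt_or_ge i n with hin | hin
    · have harg : (fun j : Fin i => Function.update f n F j) = fun j : Fin i => f j :=
        funext fun j => Function.update_of_ne (by omega) _ _
      rw [Function.update_of_ne (by omega : i ≠ n), harg]
      exact hleg.1 i hin
    · have hin' : i = n := by omega
      subst hin'
      have harg : (fun j : Fin i => Function.update f i F j) = fun j : Fin i => f j :=
        funext fun j => Function.update_of_ne (by omega) _ _
      rw [Function.update_self, harg]
      exact hF
  · intro i hi
    have hi' : n + 1 ≤ i := hi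
    show Function.update f n F i = ∅
    rw [Function.update_of_ne (by omega : i ≠ n)]
    exact hleg.2 i (by omega)
  · exact Nat.le_succ n
  · intro i hi
    have hi' : i < n := hi
    show Function.update f n F i = f i
    exact Function.update_of_ne (by omega) _ _

/-- Finite legal plays of a fixed length form a countable collection. -/
lemma auxCond_countable_level (α : MAliceStrategy X)
    (hα : ∀ n h, α n h ∈ CtblNetwork X) (n : ℕ) :
    {f : ℕ → Finset (Set X) | AuxLegal α n f}.Countable := by
  classical
  induction n with
  | zero =>
    apply Set.Countable.mono _ (Set.countable_singleton (fun _ => (∅ : Finset (Set X))))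
    intro f hf
    have : f = fun _ => ∅ := funext fun i => hf.2 i (Nat.zero_le i)
    simp [this]
  | succ n ih =>
    have hbig : (⋃ g ∈ {f : ℕ → Finset (Set X) | AuxLegal α n f},
        (fun F => Function.update g n F) ''
          {F : Finset (Set X) | ↑F ⊆ α n (fun j : Fin n => g j)}).Countable :=
      Set.Countable.biUnion ih (fun g _ =>
        Set.Countable.image (aux_countable_finsets (hα n (fun j : Fin n => g j)).1) _)
    apply Set.Countable.mono _ hbig
    intro f hf
    set g : ℕ → Finset (Set X) := Function.update f n ∅ with hgdef
    have hgn : ∀ i, i ≠ n → g i = f i := fun i hi => Function.update_of_ne hi _ _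
    have hg : AuxLegal α n g := by
      constructor
      · intro i hi
        have harg : (fun j : Fin i => g j) = fun j : Fin i => f j :=
          funext fun j => hgn j (by omega)
        rw [hgn i (by omega), harg]
        exact hf.1 i (by omega)
      · intro i hi
        rcases Nat.lt_or_ge n i with h' | h'
        · rw [hgn i (by omega)]
          exact hf.2 i (by omega)
        · have : i = n := by omega
          subst this
          exact Function.update_self _ _ _
    have hFn : (↑(f n) : Set (Set X)) ⊆ α n (fun j : Fin n => g j) := by
      have harg : (fun j : Fin n => g j) = fun j : Fin n => f j :=
        funext fun j => hgn j (by omega)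
      rw [harg]
      exact hf.1 n (by omega)
    have heq : Function.update g n (f n) = f := by
      funext i
      rcases eq_or_ne i n with rfl | hi
      · exact Function.update_self _ _ _
      · rw [Function.update_of_ne hi, hgn i hi]
    exact Set.mem_biUnion hg ⟨f n, hFn, heq⟩

/-- The poset of legal plays is countable. -/
lemma auxCond_countable (α : MAliceStrategy X) (hα : ∀ n h, α n h ∈ CtblNetwork X) :
    Countable (AuxCond α) := by
  have hS : {c : ℕ × (ℕ → Finset (Set X)) | AuxLegal α c.1 c.2}.Countable := by
    apply Set.Countable.mono _ (Set.countable_iUnion (fun n : ℕ =>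
      Set.Countable.image (auxCond_countable_level α hα n) (Prod.mk n)))
    rintro ⟨n, f⟩ hf
    exact Set.mem_iUnion.mpr ⟨n, Set.mem_image_of_mem _ hf⟩
  exact hS.to_subtype

/-- Dense sets forcing the play to get long. -/
def AuxE (α : MAliceStrategy X) (k : ℕ) : Set (AuxCond α) := {c | k ≤ c.1.1}

/-- Dense sets forcing the pair `(x, U)` to be captured. -/
def AuxD (α : MAliceStrategy X) (q : X × Set X) : Set (AuxCond α) :=
  {c | ∃ i, i < c.1.1 ∧ ∃ N ∈ c.1.2 i, q.1 ∈ N ∧ N ⊆ q.2}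

lemma auxE_dense (α : MAliceStrategy X) (k : ℕ) : PosetDense (AuxE α k) := by
  rintro ⟨⟨n, f⟩, hl⟩
  refine ⟨⟨(max n k, f), ⟨?_, ?_⟩⟩, ?_, ?_⟩
  · intro i hi
    show ↑(f i) ⊆ α i fun j : Fin i => f ↑j
    rcases Nat.lt_or_ge i n with hin | hin
    · exact hl.1 i hin
    · have hl2 : f i = ∅ := hl.2 i (by omega)
      rw [hl2]
      simp
  · intro i hi
    have hi' : max n k ≤ i := hi
    exact hl.2 i (le_trans (le_max_left _ _) hi')
  · show k ≤ max n k
    exact le_max_right _ _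
  · exact ⟨le_max_left _ _, fun _ _ => rfl⟩

lemma auxD_dense (α : MAliceStrategy X) (hα : ∀ n h, α n h ∈ CtblNetwork X)
    (q : X × Set X) (hopen : IsOpen q.2) (hxq : q.1 ∈ q.2) : PosetDense (AuxD α q) := by
  intro c
  obtain ⟨N, hN𝒩, hxN, hNq⟩ :=
    (hα c.1.1 (fun j : Fin c.1.1 => c.1.2 j)).2 q.1 q.2 hopen hxq
  obtain ⟨d, hdc, hdn, hdF⟩ := auxCond_extend α c {N} (by simpa using hN𝒩)
  refine ⟨d, ⟨c.1.1, by omega, N, ?_, hxN, hNq⟩, hdc⟩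
  rw [hdF]
  exact Finset.mem_singleton_self N

end AuxGame


universe u
theorem stmt10 (hMA : MartinsAxiomBelow domNumber)
    {X : Type u} [TopologicalSpace X] [T2Space X]
    (hnw : (CtblNetwork X).Nonempty)
    (hcard : Cardinal.mk X < Cardinal.lift.{u} domNumber)
    (hw : topWeight X < Cardinal.lift.{u} domNumber) :
    ¬ MAliceWins X := by
  rintro ⟨α, hleg, hwin⟩
  classical
  -- a basis realizing the weight
  have hBne : { c | ∃ B : Set (Set X), TopologicalSpace.IsTopologicalBasis B ∧
      Cardinal.mk B = c }.Nonempty :=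
    ⟨_, { U : Set X | IsOpen U }, isTopologicalBasis_opens, rfl⟩
  obtain ⟨B, hBbasis, hBcard⟩ := csInf_mem hBne
  have hBlt : Cardinal.mk B < Cardinal.lift.{u} domNumber := by
    have hw' : sInf { c | ∃ B : Set (Set X), TopologicalSpace.IsTopologicalBasis B ∧
        Cardinal.mk B = c } < Cardinal.lift.{u} domNumber := hw
    rwa [← hBcard] at hw'
  haveI := auxCond_countable α hleg
  obtain ⟨g, hg⟩ := exists_surjective_nat (AuxCond α)
  set S : Set (X × Set X) := {q : X × Set X | q.2 ∈ B ∧ q.1 ∈ q.2} with hS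
  set 𝒟 : Set (Set (AuxCond α)) := Set.range (AuxE α) ∪ AuxD α '' S with h𝒟
  have hdense : ∀ Ds ∈ 𝒟, PosetDense Ds := by
    rintro _ (⟨k, rfl⟩ | ⟨q, hq, rfl⟩)
    · exact auxE_dense α k
    · exact auxD_dense α hleg q (hBbasis.isOpen hq.1) hq.2
  have hd0lt : (Cardinal.aleph0 : Cardinal.{u}) < Cardinal.lift.{u} domNumber := by
    have h : Cardinal.lift.{u} Cardinal.aleph0 < Cardinal.lift.{u} domNumber :=
      Cardinal.lift_lt.mpr aux_aleph0_lt_domNumber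
    simpa using h
  have hcard𝒟 : Cardinal.mk 𝒟 < Cardinal.lift.{u} domNumber := by
    have h1 : Cardinal.mk 𝒟 ≤ Cardinal.mk (Set.range (AuxE α)) + Cardinal.mk (AuxD α '' S) := by
      rw [h𝒟]; exact Cardinal.mk_union_le _ _
    have h2 : Cardinal.mk (Set.range (AuxE α)) ≤ Cardinal.aleph0 := by
      have h := Cardinal.mk_range_le_lift (f := AuxE α)
      simpa using h
    have h3 : Cardinal.mk (AuxD α '' S) ≤ Cardinal.mk S := Cardinal.mk_image_le
    have h4 : Cardinal.mk S ≤ Cardinal.mk X * Cardinal.mk B := by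
      have hinj : Function.Injective (fun q : S => ((q.1.1 : X), (⟨q.1.2, q.2.1⟩ : B))) := by
        rintro ⟨⟨x, U⟩, hq⟩ ⟨⟨y, V⟩, hq'⟩ h
        simp only [Prod.mk.injEq, Subtype.mk.injEq] at h
        exact Subtype.ext (Prod.ext h.1 h.2)
      have h := Cardinal.mk_le_of_injective hinj
      simpa [Cardinal.mk_prod] using h
    have h5 : Cardinal.mk X * Cardinal.mk B < Cardinal.lift.{u} domNumber :=
      Cardinal.mul_lt_of_lt hd0lt.le hcard hBlt
    have h6 : Cardinal.mk (Set.range (AuxE α)) + Cardinal.mk (AuxD α '' S) <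
        Cardinal.lift.{u} domNumber :=
      Cardinal.add_lt_of_lt hd0lt.le (lt_of_le_of_lt h2 hd0lt) (lt_of_le_of_lt (h3.trans h4) h5)
    exact lt_of_le_of_lt h1 h6
  obtain ⟨F, hFfilter, hFmeet⟩ := aux_ma_transfer hMA g hg 𝒟 hdense hcard𝒟
  have hEmem : ∀ k : ℕ, AuxE α k ∈ 𝒟 := fun k => Set.mem_union_left _ ⟨k, rfl⟩
  have hcf : ∀ n : ℕ, (F ∩ AuxE α (n + 1)).Nonempty := fun n => hFmeet _ (hEmem (n + 1))
  set cf : ℕ → AuxCond α := fun n => (hcf n).some with hcfdef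
  have hcfF : ∀ n, cf n ∈ F := fun n => ((hcf n).some_mem).1
  have hcflen : ∀ n, n + 1 ≤ (cf n).1.1 := fun n => ((hcf n).some_mem).2
  have hcompat : ∀ c ∈ F, ∀ d ∈ F, ∀ i, i < c.1.1 → i < d.1.1 → c.1.2 i = d.1.2 i := by
    intro c hc d hd i hic hid
    obtain ⟨r, hrF, hrc, hrd⟩ := hFfilter.2.2 c hc d hd
    rw [auxCond_le_iff] at hrc hrd
    exact (hrc.2 i hic).symm.trans (hrd.2 i hid)
  set b : ℕ → Finset (Set X) := fun n => (cf n).1.2 n with hbdef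
  have hblegal : ∀ n, ↑(b n) ⊆ α n (fun i : Fin n => b i.1) := by
    intro n
    have harg : (fun i : Fin n => b i.1) = fun j : Fin n => (cf n).1.2 j.1 := by
      funext j
      exact hcompat (cf j.1) (hcfF j.1) (cf n) (hcfF n) j.1
        (by have := hcflen j.1; omega)
        (by have := hcflen n; have := j.2; omega)
    show ↑((cf n).1.2 n) ⊆ α n (fun i : Fin n => b i.1)
    rw [harg]
    exact (cf n).2.1 n (by have := hcflen n; omega)
  have hnet : IsNetwork (⋃ n, (↑(b n) : Set (Set X))) := by
    intro x U hU hxU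
    obtain ⟨Bx, hBxB, hxBx, hBxU⟩ := hBbasis.exists_subset_of_mem_open hxU hU
    have hmem : AuxD α (x, Bx) ∈ 𝒟 := Set.mem_union_right _ ⟨(x, Bx), ⟨hBxB, hxBx⟩, rfl⟩
    obtain ⟨c, hcF, hcD⟩ := hFmeet _ hmem
    obtain ⟨i, hi, N, hNc, hxN, hNBx⟩ := hcD
    refine ⟨N, Set.mem_iUnion.mpr ⟨i, ?_⟩, hxN, hNBx.trans hBxU⟩
    have hbi : b i = c.1.2 i :=
      hcompat (cf i) (hcfF i) c hcF i (by have := hcflen i; omega) hi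
    rw [Finset.mem_coe, hbi]
    exact hNc
  exact hwin b hblegal hnet
end

section
/- Assume MA[𝔡]. Let X be a Hausdorff space with countable network weight and weight strictly less than 𝔡. Then the following are equivalent: (1) |X| < 𝔡; (2) Alice does not have a winning strategy in the M-nw-selective game on X; (3) X is M-nw-selective. -/
open Set Cardinal TopologicalSpace

universe u

lemma domNumber_spec : ∃ D : Set (ℕ → ℕ),
    (∀ g : ℕ → ℕ, ∃ f ∈ D, ∀ᶠ n in Filter.atTop, g n ≤ f n) ∧ Cardinal.mk D = domNumber := by
  have hne : { c | ∃ D : Set (ℕ → ℕ), (∀ g : ℕ → ℕ, ∃ f ∈ D, ∀ᶠ n in Filter.atTop, g n ≤ f n) ∧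
      Cardinal.mk D = c }.Nonempty := by
    exact ⟨_, Set.univ, fun g => ⟨g, trivial, Filter.Eventually.of_forall fun n => le_rfl⟩, rfl⟩
  exact csInf_mem hne

lemma aleph0_lt_domNumber : ℵ₀ < domNumber := by
  obtain ⟨D, hD, hmk⟩ := domNumber_spec
  rw [← hmk]
  by_contra h
  push_neg at h
  rw [Cardinal.mk_le_aleph0_iff] at h
  have hne : D.Nonempty := by
    obtain ⟨f, hf, -⟩ := hD 0; exact ⟨f, hf⟩
  have : Set.Countable D := h
  obtain ⟨d, hd⟩ := (Set.countable_iff_exists_surjective hne).1 this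
  set g : ℕ → ℕ := fun n => (Finset.range (n+1)).sup (fun i => (d i : ℕ → ℕ) n) + 1 with hg
  obtain ⟨f, hf, hev⟩ := hD g
  obtain ⟨i, hi⟩ := hd ⟨f, hf⟩
  obtain ⟨N, hN⟩ := Filter.eventually_atTop.1 hev
  have hn := hN (max N i) (le_max_left _ _)
  have : f (max N i) < g (max N i) := by
    have h2 : (d i : ℕ → ℕ) (max N i) ≤ (Finset.range (max N i + 1)).sup (fun j => (d j : ℕ → ℕ) (max N i)) :=
      Finset.le_sup (f := fun j => (d j : ℕ → ℕ) (max N i)) (Finset.mem_range.2 (Nat.lt_succ_of_le (le_max_right _ _)))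
    rw [hi] at h2
    have h3 : ((⟨f, hf⟩ : D) : ℕ → ℕ) (max N i) = f (max N i) := rfl
    rw [h3] at h2
    simp only [hg]
    omega
  omega

lemma exists_strict_dom : ∃ D : Set (ℕ → ℕ),
    (∀ g : ℕ → ℕ, ∃ f ∈ D, ∀ n, g n < f n) ∧ Cardinal.mk D ≤ domNumber := by
  obtain ⟨D0, hD0, hmk⟩ := domNumber_spec
  refine ⟨Set.range (fun p : D0 × ℕ => fun n => (p.1 : ℕ → ℕ) (n + p.2) + 1), ?_, ?_⟩
  · intro g
    set g' : ℕ → ℕ := fun n => (Finset.range (n+1)).sup g with hg'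
    have hmono : Monotone g' := by
      intro a b hab
      exact Finset.sup_mono (Finset.range_subset_range.2 (by omega))
    have hle : ∀ n, g n ≤ g' n := fun n =>
      Finset.le_sup (f := g) (Finset.mem_range.2 (Nat.lt_succ_self n))
    obtain ⟨f, hf, hev⟩ := hD0 g'
    obtain ⟨N, hN⟩ := Filter.eventually_atTop.1 hev
    refine ⟨_, ⟨(⟨⟨f, hf⟩, N⟩ : D0 × ℕ), rfl⟩, fun n => ?_⟩
    have h1 : g' n ≤ g' (n + N) := hmono (by omega)
    have h2 : g' (n + N) ≤ f (n + N) := hN _ (by omega)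
    have := hle n
    simp only []
    omega
  · calc Cardinal.mk _ ≤ Cardinal.mk (D0 × ℕ) := Cardinal.mk_range_le
    _ = Cardinal.mk D0 * ℵ₀ := by rw [Cardinal.mk_prod, Cardinal.mk_nat, Cardinal.lift_id, Cardinal.lift_id]
    _ ≤ domNumber * domNumber := by
        rw [hmk]
        exact mul_le_mul_right aleph0_lt_domNumber.le _
    _ = domNumber := Cardinal.mul_eq_self (aleph0_lt_domNumber.le)

lemma mk_lt_of_MNwSelective {X : Type u} [TopologicalSpace X]
    (hnw : (CtblNetwork X).Nonempty) (h : MNwSelective X) :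
    Cardinal.mk X < Cardinal.lift.{u} domNumber := by
  by_contra hbig
  push_neg at hbig
  obtain ⟨D, hDdom, hDmk⟩ := exists_strict_dom
  -- embed D into X
  have hDX : Cardinal.lift.{u} (Cardinal.mk D) ≤ Cardinal.lift.{0} (Cardinal.mk X) := by
    rw [Cardinal.lift_uzero]
    exact le_trans (Cardinal.lift_le.2 hDmk) hbig
  obtain ⟨ι⟩ := Cardinal.lift_mk_le'.1 hDX
  -- X is nonempty
  have hXne : Nonempty X := by
    rcases isEmpty_or_nonempty X with hempty | hne
    · exfalso
      have : Cardinal.mk X = 0 := Cardinal.mk_eq_zero X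
      rw [this] at hbig
      have : (0:Cardinal) < Cardinal.lift.{u} domNumber := by
        have h0 : (0:Cardinal) < domNumber := lt_of_le_of_lt zero_le aleph0_lt_domNumber
        have := Cardinal.lift_lt.{0,u}.2 h0
        rwa [Cardinal.lift_zero] at this
      exact absurd hbig (not_le.2 this)
    · exact hne
  obtain ⟨𝒩, h𝒩c, h𝒩n⟩ := hnw
  -- 𝒩 is nonempty
  have h𝒩ne : 𝒩.Nonempty := by
    obtain ⟨x⟩ := hXne
    obtain ⟨N, hN, -, -⟩ := h𝒩n x Set.univ isOpen_univ trivial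
    exact ⟨N, hN⟩
  obtain ⟨e0, he0⟩ := (Set.countable_iff_exists_surjective h𝒩ne).1 h𝒩c
  set e : ℕ → Set X := fun k => (e0 (Nat.unpair k).1 : Set X) with he
  have heMem : ∀ k, e k ∈ 𝒩 := fun k => (e0 (Nat.unpair k).1).2
  have heRep : ∀ S ∈ 𝒩, ∀ K : ℕ, ∃ k, K ≤ k ∧ e k = S := by
    intro S hS K
    obtain ⟨j, hj⟩ := he0 ⟨S, hS⟩
    refine ⟨Nat.pair j K, Nat.right_le_pair j K, ?_⟩
    simp only [he, Nat.unpair_pair]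
    rw [hj]
  classical
  set φ : X → (ℕ → ℕ) := fun x => if hx : ∃ d : D, ι d = x then (hx.choose : ℕ → ℕ) else 0
    with hφ
  have hφι : ∀ d : D, φ (ι d) = (d : ℕ → ℕ) := by
    intro d
    have hx : ∃ d' : D, ι d' = ι d := ⟨d, rfl⟩
    simp only [hφ, dif_pos hx]
    have := hx.choose_spec
    have : hx.choose = d := ι.injective this
    rw [this]
  set Rem : ℕ → ℕ → Set X := fun n k => {x | x ∈ Set.range ι ∧ k < φ x n} with hRem
  set A : ℕ → Set (Set X) := fun n => Set.range (fun k => e k \ Rem n k) with hA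
  have hAnet : ∀ n, A n ∈ CtblNetwork X := by
    intro n
    refine ⟨Set.countable_range _, ?_⟩
    intro x U hU hxU
    obtain ⟨S, hS, hxS, hSU⟩ := h𝒩n x U hU hxU
    obtain ⟨k, hk, hek⟩ := heRep S hS (φ x n)
    refine ⟨e k \ Rem n k, ⟨k, rfl⟩, ⟨by rw [hek]; exact hxS, ?_⟩, ?_⟩
    · rintro ⟨-, hlt⟩
      omega
    · rw [hek]
      exact Set.diff_subset.trans hSU
  obtain ⟨F, hF, hFnet⟩ := h A hAnet
  set κ : ℕ → Set X → ℕ := fun n E => if hE : ∃ k, E = e k \ Rem n k then hE.choose else 0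
    with hκ
  set g : ℕ → ℕ := fun n => (F n).sup (κ n) with hg
  obtain ⟨d, hd, hdg⟩ := hDdom g
  set y : X := ι ⟨d, hd⟩ with hy
  have hymem : ∀ n, ∀ E ∈ F n, y ∉ E := by
    intro n E hE
    have hEA : E ∈ A n := hF n hE
    obtain ⟨k0, hk0⟩ := hEA
    have hex : ∃ k, E = e k \ Rem n k := ⟨k0, hk0.symm⟩
    have hEeq : E = e hex.choose \ Rem n hex.choose := hex.choose_spec
    have hkle : κ n E ≤ g n := Finset.le_sup hE
    have hκval : κ n E = hex.choose := by simp only [hκ, dif_pos hex]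
    intro hyE
    rw [hEeq] at hyE
    refine hyE.2 ⟨⟨⟨d, hd⟩, rfl⟩, ?_⟩
    have : φ y n = d n := by rw [hy, hφι]
    rw [this]
    have := hdg n
    omega
  obtain ⟨N, hN, hyN, -⟩ := hFnet y Set.univ isOpen_univ trivial
  obtain ⟨_, ⟨n, rfl⟩, hNn⟩ := hN
  exact hymem n N hNn hyN

lemma MAliceWins_of_not_MNwSelective {X : Type u} [TopologicalSpace X]
    (h : ¬ MNwSelective X) : MAliceWins X := by
  rw [MNwSelective] at h
  push_neg at h
  obtain ⟨A, hA, hfail⟩ := h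
  refine ⟨fun n _ => A n, fun n _ => hA n, ?_⟩
  intro b hb
  exact hfail b (fun n => hb n)

def MLegal {X : Type u} [TopologicalSpace X] (α : MAliceStrategy X)
    (l : List (Finset (Set X))) : Prop :=
  ∀ i, (h : i < l.length) → ↑(l[i]) ⊆ α i (fun j : Fin i => l[j.1]'(j.2.trans h))

lemma mlegal_nil {X : Type u} [TopologicalSpace X] (α : MAliceStrategy X) :
    MLegal α [] := by
  intro i h
  simp at h

lemma mlegal_prefix {X : Type u} [TopologicalSpace X] {α : MAliceStrategy X}
    {l m : List (Finset (Set X))} (hm : MLegal α m) (hp : l <+: m) : MLegal α l := by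
  intro i h
  have hlen : i < m.length := lt_of_lt_of_le h hp.length_le
  have h1 : l[i]'h = m[i]'hlen := hp.getElem h
  rw [h1]
  have h2 : (fun j : Fin i => l[j.1]'(j.2.trans h)) =
      (fun j : Fin i => m[j.1]'(lt_trans j.2 hlen)) := by
    funext j; exact hp.getElem _
  rw [h2]
  exact hm i hlen

lemma mlegal_append {X : Type u} [TopologicalSpace X] {α : MAliceStrategy X}
    {l : List (Finset (Set X))} {b : Finset (Set X)} (hl : MLegal α l)
    (hb : ↑b ⊆ α l.length (fun j : Fin l.length => l[j.1]'j.2)) :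
    MLegal α (l ++ [b]) := by
  intro i h
  have hlen : (l ++ [b]).length = l.length + 1 := by simp
  rcases Nat.lt_or_ge i l.length with hi | hi
  · have h1 : (l ++ [b])[i]'h = l[i]'hi := List.getElem_append_left hi
    rw [h1]
    have h2 : (fun j : Fin i => (l ++ [b])[j.1]'(j.2.trans h)) =
        (fun j : Fin i => l[j.1]'(j.2.trans hi)) := by
      funext j; exact List.getElem_append_left (j.2.trans hi)
    rw [h2]
    exact hl i hi
  · have hieq : i = l.length := by omega
    subst hieq
    have h1 : (l ++ [b])[l.length]'h = b := List.getElem_concat_length rfl _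
    rw [h1]
    have h2 : (fun j : Fin l.length => (l ++ [b])[j.1]'(j.2.trans h)) =
        (fun j : Fin l.length => l[j.1]'j.2) := by
      funext j; exact List.getElem_append_left j.2
    rw [h2]
    exact hb

lemma countable_finset_subset {γ : Type*} {C : Set γ} (hC : C.Countable) :
    Set.Countable {s : Finset γ | ↑s ⊆ C} := by
  have h1 := Set.countable_setOf_finite_subset hC
  have h2 : {s : Finset γ | ↑s ⊆ C} ⊆
      (fun s : Finset γ => (↑s : Set γ)) ⁻¹' {t | t.Finite ∧ t ⊆ C} :=
    fun s hs => ⟨s.finite_toSet, hs⟩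
  exact Set.Countable.mono h2 (h1.preimage Finset.coe_injective)

lemma mlegal_countable {X : Type u} [TopologicalSpace X] {α : MAliceStrategy X}
    (hα : ∀ n h, α n h ∈ CtblNetwork X) :
    Set.Countable {l : List (Finset (Set X)) | MLegal α l} := by
  have hn : ∀ n, Set.Countable {l : List (Finset (Set X)) | MLegal α l ∧ l.length = n} := by
    intro n
    induction n with
    | zero =>
      apply Set.Countable.mono _ (Set.countable_singleton ([] : List (Finset (Set X))))
      rintro l ⟨-, hl⟩
      rw [List.length_eq_zero_iff] at hl
      simp [hl]
    | succ n ih =>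
      have hsub : {l : List (Finset (Set X)) | MLegal α l ∧ l.length = n + 1} ⊆
          ⋃ l ∈ {l : List (Finset (Set X)) | MLegal α l ∧ l.length = n},
            (fun b => l ++ [b]) ''
              {b : Finset (Set X) | ↑b ⊆ α l.length (fun j : Fin l.length => l[j.1]'j.2)} := by
        rintro m ⟨hmL, hmlen⟩
        have hne : m ≠ [] := by
          intro h; rw [h] at hmlen; simp at hmlen
        have heq : m.dropLast ++ [m.getLast hne] = m := List.dropLast_append_getLast hne
        have hpre : m.dropLast <+: m := ⟨[m.getLast hne], heq⟩
        have hdlen : m.dropLast.length = n := by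
          simp [List.length_dropLast, hmlen]
        refine Set.mem_biUnion ⟨mlegal_prefix hmL hpre, hdlen⟩ ?_
        refine ⟨m.getLast hne, ?_, heq⟩
        have hnlt : m.dropLast.length < m.length := by omega
        have hlast : m.getLast hne = m[m.dropLast.length]'hnlt := by
          rw [List.getLast_eq_getElem]
          congr 1
          omega
        have := hmL m.dropLast.length hnlt
        rw [← hlast] at this
        have h2 : (fun j : Fin m.dropLast.length => m[j.1]'(j.2.trans hnlt)) =
            (fun j : Fin m.dropLast.length => m.dropLast[j.1]'j.2) := by
          funext j; exact (hpre.getElem j.2).symm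
        rw [h2] at this
        exact this
      refine Set.Countable.mono hsub ?_
      refine Set.Countable.biUnion ih ?_
      intro l _
      exact Set.Countable.image (countable_finset_subset (hα l.length _).1) _
  have : {l : List (Finset (Set X)) | MLegal α l} =
      ⋃ n, {l : List (Finset (Set X)) | MLegal α l ∧ l.length = n} := by
    ext l
    simp only [Set.mem_setOf_eq, Set.mem_iUnion]
    exact ⟨fun h => ⟨l.length, h, rfl⟩, fun ⟨n, h, _⟩ => h⟩
  rw [this]
  exact Set.countable_iUnion hn

structure PCode (s : Set ℕ) : Type where
  code : ℕ
  hmem : code ∈ s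

def pcodeEquiv (s : Set ℕ) : {n // n ∈ s} ≃ PCode s where
  toFun := fun n => ⟨n.1, n.2⟩
  invFun := fun c => ⟨c.code, c.hmem⟩
  left_inv := fun n => rfl
  right_inv := fun c => rfl

lemma not_MAliceWins_of_small {X : Type u} [TopologicalSpace X]
    (hMA : MartinsAxiomBelow domNumber)
    (hw : topWeight X < Cardinal.lift.{u} domNumber)
    (hX : Cardinal.mk X < Cardinal.lift.{u} domNumber) :
    ¬ MAliceWins X := by
  rintro ⟨α, hα1, hα2⟩
  classical
  -- a basis of minimal cardinality
  have hBne : { c | ∃ B : Set (Set X), IsTopologicalBasis B ∧ Cardinal.mk B = c }.Nonempty :=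
    ⟨_, {U : Set X | IsOpen U}, isTopologicalBasis_opens, rfl⟩
  obtain ⟨B, hBbasis, hBmk⟩ := csInf_mem hBne
  have hBlt : Cardinal.mk B < Cardinal.lift.{u} domNumber := by
    rw [hBmk]; exact hw
  -- the poset of legal finite plays
  let MP := {l : List (Finset (Set X)) // MLegal α l}
  have hMPc : Countable MP := (mlegal_countable hα1).to_subtype
  obtain ⟨f, hf⟩ := exists_injective_nat MP
  let P₀ := PCode (Set.range f)
  let eqv : MP ≃ P₀ := (Equiv.ofInjective f hf).trans (pcodeEquiv (Set.range f))
  haveI hP₀c : Countable P₀ := Countable.of_equiv _ (pcodeEquiv (Set.range f))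
  let L : P₀ → List (Finset (Set X)) := fun p => (eqv.symm p).1
  letI : Preorder MP :=
    { le := fun p q => q.1 <+: p.1
      lt := fun p q => q.1 <+: p.1 ∧ ¬ p.1 <+: q.1
      le_refl := fun p => List.prefix_refl _
      le_trans := fun a b c hab hbc => List.IsPrefix.trans hbc hab
      lt_iff_le_not_ge := fun a b => Iff.rfl }
  letI : Preorder P₀ := Preorder.lift (fun p => eqv.symm p)
  have hle : ∀ p q : P₀, p ≤ q ↔ L q <+: L p := fun p q => Iff.rfl
  have hLeqv : ∀ w : MP, L (eqv w) = w.1 := by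
    intro w
    show (eqv.symm (eqv w)).1 = w.1
    rw [Equiv.symm_apply_apply]
  have hLlegal : ∀ p : P₀, MLegal α (L p) := fun p => (eqv.symm p).2
  -- dense sets
  let DxU : X → Set X → Set P₀ := fun x U =>
    {p | x ∈ U → ∃ i, ∃ h : i < (L p).length, ∃ N ∈ (L p)[i]'h, x ∈ N ∧ N ⊆ U}
  let Dlen : ℕ → Set P₀ := fun n => {p | n ≤ (L p).length}
  let 𝒟 : Set (Set P₀) :=
    (Set.range fun z : X × ↥B => DxU z.1 z.2.1) ∪ Set.range Dlen
  -- extension of a play by one move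
  have hext : ∀ (p : P₀) (b : Finset (Set X)),
      ↑b ⊆ α (L p).length (fun j : Fin (L p).length => (L p)[j.1]'j.2) →
      ∃ q : P₀, L q = L p ++ [b] ∧ q ≤ p := by
    intro p b hb
    refine ⟨eqv ⟨L p ++ [b], mlegal_append (hLlegal p) hb⟩, hLeqv _, ?_⟩
    refine (hle _ _).2 ?_
    rw [hLeqv]
    exact List.prefix_append _ _
  -- density
  have hdense : ∀ D ∈ 𝒟, PosetDense D := by
    rintro D (⟨⟨x, U⟩, rfl⟩ | ⟨n, rfl⟩)
    · intro p
      by_cases hxU : x ∈ (U : Set X)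
      · obtain ⟨N, hN, hxN, hNU⟩ :=
          (hα1 (L p).length (fun j : Fin (L p).length => (L p)[j.1]'j.2)).2 x U
            (hBbasis.isOpen U.2) hxU
        have hbsub : ↑({N} : Finset (Set X)) ⊆
            α (L p).length (fun j : Fin (L p).length => (L p)[j.1]'j.2) := by
          rw [Finset.coe_singleton, Set.singleton_subset_iff]; exact hN
        obtain ⟨q, hq1, hq2⟩ := hext p ({N} : Finset (Set X)) hbsub
        refine ⟨q, fun _ => ⟨(L p).length, ?_, N, ?_, hxN, hNU⟩, hq2⟩
        · rw [hq1]; simp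
        · have hgl : (L q)[(L p).length]'(by rw [hq1]; simp) = ({N} : Finset (Set X)) := by
            simp only [hq1]
            exact List.getElem_concat_length rfl
              (by simp)
          rw [hgl]
          exact Finset.mem_singleton_self N
      · exact ⟨p, fun hx => absurd hx hxU, le_refl p⟩
    · intro p
      have : ∀ m : ℕ, ∃ q : P₀, m ≤ (L q).length ∧ q ≤ p := by
        intro m
        induction m with
        | zero => exact ⟨p, Nat.zero_le _, le_refl p⟩
        | succ m ih =>
          obtain ⟨q, hq1, hq2⟩ := ih
          obtain ⟨q', hq'1, hq'2⟩ := hext q ∅ (by simp)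
          refine ⟨q', ?_, le_trans hq'2 hq2⟩
          rw [hq'1]
          simp
          omega
      obtain ⟨q, hq1, hq2⟩ := this n
      exact ⟨q, hq1, hq2⟩
  -- ccc
  have hccc : PosetCCC P₀ := fun A _ => A.to_countable
  -- cardinality of the family of dense sets
  have h𝒟lt : Cardinal.mk 𝒟 < domNumber := by
    have h1 : Cardinal.mk ↥(Set.range fun z : X × ↥B => DxU z.1 z.2.1) < domNumber := by
      have hr := Cardinal.mk_range_le_lift (f := fun z : X × ↥B => DxU z.1 z.2.1)
      rw [Cardinal.lift_uzero] at hr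
      have hprod : Cardinal.mk (X × ↥B) < Cardinal.lift.{u} domNumber := by
        have : Cardinal.mk (X × ↥B) = Cardinal.mk X * Cardinal.mk ↥B := by
          rw [Cardinal.mk_prod, Cardinal.lift_id, Cardinal.lift_id]
        rw [this]
        exact Cardinal.mul_lt_of_lt (Cardinal.aleph0_le_lift.2 aleph0_lt_domNumber.le) hX hBlt
      have := lt_of_le_of_lt hr hprod
      exact Cardinal.lift_lt.1 this
    have h2 : Cardinal.mk ↥(Set.range Dlen) < domNumber := by
      refine lt_of_le_of_lt (le_trans Cardinal.mk_range_le ?_) aleph0_lt_domNumber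
      rw [Cardinal.mk_nat]
    exact lt_of_le_of_lt (Cardinal.mk_union_le _ _)
      (Cardinal.add_lt_of_lt aleph0_lt_domNumber.le h1 h2)
  -- apply MA
  have hP₀ne : Nonempty P₀ := ⟨eqv ⟨[], mlegal_nil α⟩⟩
  obtain ⟨F, ⟨hFne, hFup, hFdir⟩, hFmeet⟩ := hMA P₀ hP₀ne hccc 𝒟 hdense h𝒟lt
  -- extract the play
  have hp : ∀ n : ℕ, ∃ p : P₀, p ∈ F ∧ n + 1 ≤ (L p).length := by
    intro n
    obtain ⟨p, hpF, hpD⟩ := hFmeet (Dlen (n+1)) (Or.inr ⟨n+1, rfl⟩)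
    exact ⟨p, hpF, hpD⟩
  choose pf hpF hpD using hp
  have compat : ∀ p ∈ F, ∀ q ∈ F, ∀ i (hip : i < (L p).length) (hiq : i < (L q).length),
      (L p)[i]'hip = (L q)[i]'hiq := by
    intro p hp q hq i hip hiq
    obtain ⟨r, hrF, hrp, hrq⟩ := hFdir p hp q hq
    replace hrp := (hle r p).1 hrp
    replace hrq := (hle r q).1 hrq
    exact (hrp.getElem hip).trans (hrq.getElem hiq).symm
  let b : ℕ → Finset (Set X) := fun n =>
    (L (pf n))[n]'(lt_of_lt_of_le (Nat.lt_succ_self n) (hpD n))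
  have hbL : ∀ p ∈ F, ∀ i (hip : i < (L p).length), (L p)[i]'hip = b i := by
    intro p hp i hip
    exact compat p hp (pf i) (hpF i) i hip (lt_of_lt_of_le (Nat.lt_succ_self i) (hpD i))
  have hleg : ∀ n, ↑(b n) ⊆ α n (fun i : Fin n => b i.1) := by
    intro n
    have hlen : n < (L (pf n)).length := lt_of_lt_of_le (Nat.lt_succ_self n) (hpD n)
    have hL := hLlegal (pf n) n hlen
    have harg : (fun j : Fin n => (L (pf n))[j.1]'(j.2.trans hlen)) =
        (fun i : Fin n => b i.1) := by
      funext j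
      exact hbL (pf n) (hpF n) j.1 (j.2.trans hlen)
    rw [harg] at hL
    exact hL
  refine hα2 b hleg ?_
  intro x U hU hxU
  obtain ⟨V, hVB, hxV, hVU⟩ := hBbasis.exists_subset_of_mem_open hxU hU
  obtain ⟨p, hpF', hpD'⟩ := hFmeet (DxU x V) (Or.inl ⟨(x, ⟨V, hVB⟩), rfl⟩)
  obtain ⟨i, hi, N, hN, hxN, hNV⟩ := hpD' hxV
  refine ⟨N, ?_, hxN, hNV.trans hVU⟩
  apply Set.mem_iUnion.2
  refine ⟨i, ?_⟩
  rw [Finset.mem_coe, ← hbL p hpF' i hi]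
  exact hN

theorem stmt11 (hMA : MartinsAxiomBelow domNumber)
    {X : Type u} [TopologicalSpace X] [T2Space X]
    (hnw : (CtblNetwork X).Nonempty)
    (hw : topWeight X < Cardinal.lift.{u} domNumber) :
    (Cardinal.mk X < Cardinal.lift.{u} domNumber ↔ ¬ MAliceWins X) ∧
    (¬ MAliceWins X ↔ MNwSelective X) := by
  have h21 : ¬ MAliceWins X → MNwSelective X := by
    intro h
    by_contra hsel
    exact h (MAliceWins_of_not_MNwSelective hsel)
  have h31 : MNwSelective X → Cardinal.mk X < Cardinal.lift.{u} domNumber :=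
    mk_lt_of_MNwSelective hnw
  have h12 : Cardinal.mk X < Cardinal.lift.{u} domNumber → ¬ MAliceWins X :=
    not_MAliceWins_of_small hMA hw
  exact ⟨⟨h12, fun h => h31 (h21 h)⟩, ⟨h21, fun h => h12 (h31 h)⟩⟩
end

section
/- If X is a regular (T3) space in which Bob has a winning strategy in the M-nw-selective game, then X is σ-compact. -/
open Set Cardinal TopologicalSpace

section NwAux

open Function
open scoped Classical

variable {X : Type*} [TopologicalSpace X]

/-- Legal restricted moves for Alice: subnetworks of a fixed countable network `𝒩`. -/
def NwLegal (𝒩 A : Set (Set X)) : Prop := A ⊆ 𝒩 ∧ IsNetwork A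

lemma NwLegal.ctbl {𝒩 A : Set (Set X)} (h𝒩 : 𝒩.Countable) (hA : NwLegal 𝒩 A) :
    A ∈ CtblNetwork X := ⟨h𝒩.mono hA.1, hA.2⟩

/-- Bob's response to the history `H` (positions `< n`) followed by move `A` at inning `n`. -/
def nwResp (σ : MBobStrategy X) (H : ℕ → Set (Set X)) (n : ℕ) (A : Set (Set X)) :
    Finset (Set X) :=
  σ n (fun i : Fin (n + 1) => if i.1 = n then A else H i.1)

lemma nwResp_subset {σ : MBobStrategy X} (hw : MBobWinning σ) {H : ℕ → Set (Set X)}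
    (hH : ∀ k, H k ∈ CtblNetwork X) {A : Set (Set X)} (hA : A ∈ CtblNetwork X) (n : ℕ) :
    ↑(nwResp σ H n A) ⊆ A := by
  set m : ℕ → Set (Set X) := fun k => if k = n then A else H k with hm
  have hmc : ∀ k, m k ∈ CtblNetwork X := by
    intro k
    by_cases h : k = n <;> simp [hm, h, hA, hH k]
  have h1 := (hw m hmc).1 n
  have h2 : (fun i : Fin (n + 1) => m i.1) = fun i : Fin (n + 1) => if i.1 = n then A else H i.1 :=
    rfl
  rw [h2] at h1
  simpa [hm, nwResp] using h1

/-- The compact kernels associated to Bob's strategy. -/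
def nwK (σ : MBobStrategy X) (𝒩 : Set (Set X)) (H : ℕ → Set (Set X)) (n : ℕ) : Set X :=
  ⋂ (A : Set (Set X)) (_ : NwLegal 𝒩 A), ⋃₀ ↑(nwResp σ H n A)

lemma nwK_subset {σ : MBobStrategy X} {𝒩 : Set (Set X)} {H : ℕ → Set (Set X)} {n : ℕ}
    {A : Set (Set X)} (hA : NwLegal 𝒩 A) :
    nwK σ 𝒩 H n ⊆ ⋃₀ ↑(nwResp σ H n A) := by
  intro x hx
  simp only [nwK, Set.mem_iInter] at hx
  exact hx A hA

lemma not_mem_nwK {σ : MBobStrategy X} {𝒩 : Set (Set X)} {H : ℕ → Set (Set X)} {n : ℕ}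
    {x : X} (hx : x ∉ nwK σ 𝒩 H n) :
    ∃ A, NwLegal 𝒩 A ∧ x ∉ ⋃₀ ↑(nwResp σ H n A) := by
  simp only [nwK, Set.mem_iInter, not_forall] at hx
  obtain ⟨A, hA, hxA⟩ := hx
  exact ⟨A, hA, hxA⟩

lemma isNetwork_sep {𝒩 : Set (Set X)} (h𝒩 : IsNetwork 𝒩) (C : Set X → Prop)
    (hC : ∀ x : X, ∃ O : Set X, IsOpen O ∧ x ∈ O ∧ ∀ N : Set X, N ⊆ O → C N) :
    IsNetwork {N ∈ 𝒩 | C N} := by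
  intro x U hU hx
  obtain ⟨O, hO, hxO, hCO⟩ := hC x
  obtain ⟨N, hN, hxN, hNsub⟩ := h𝒩 x (O ∩ U) (hO.inter hU) ⟨hxO, hx⟩
  exact ⟨N, ⟨hN, hCO N (hNsub.trans Set.inter_subset_left)⟩, hxN,
    hNsub.trans Set.inter_subset_right⟩

lemma nwK_isCompact {σ : MBobStrategy X} (hw : MBobWinning σ) {𝒩 : Set (Set X)}
    (h𝒩c : 𝒩.Countable) (h𝒩net : IsNetwork 𝒩) (h𝒩cl : ∀ N ∈ 𝒩, IsClosed N)
    {H : ℕ → Set (Set X)} (hH : ∀ k, H k ∈ CtblNetwork X) (n : ℕ) :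
    IsCompact (nwK σ 𝒩 H n) := by
  classical
  have hclosed : IsClosed (nwK σ 𝒩 H n) := by
    refine isClosed_iInter fun A => isClosed_iInter fun hA => ?_
    have : ∀ N ∈ (↑(nwResp σ H n A) : Set (Set X)), IsClosed N := fun N hN =>
      h𝒩cl N (hA.1 (nwResp_subset hw hH (hA.ctbl h𝒩c) n hN))
    rw [Set.sUnion_eq_biUnion]
    exact (nwResp σ H n A).finite_toSet.isClosed_biUnion this
  refine isCompact_of_finite_subcover fun {ι} U hUo hcover => ?_
  by_cases hne : (nwK σ 𝒩 H n).Nonempty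
  · obtain ⟨x₀, hx₀⟩ := hne
    have hι : ∃ i, x₀ ∈ U i := by simpa using hcover hx₀
    obtain ⟨i₀, -⟩ := hι
    set C : Set X → Prop := fun N => (∃ i, N ⊆ U i) ∨ N ⊆ (nwK σ 𝒩 H n)ᶜ with hCdef
    have hC : ∀ x : X, ∃ O : Set X, IsOpen O ∧ x ∈ O ∧ ∀ N : Set X, N ⊆ O → C N := by
      intro x
      by_cases hx : x ∈ nwK σ 𝒩 H n
      · obtain ⟨i, hi⟩ := Set.mem_iUnion.mp (hcover hx)
        exact ⟨U i, hUo i, hi, fun N hN => Or.inl ⟨i, hN⟩⟩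
      · exact ⟨(nwK σ 𝒩 H n)ᶜ, hclosed.isOpen_compl, hx, fun N hN => Or.inr hN⟩
    set A : Set (Set X) := {N ∈ 𝒩 | C N} with hAdef
    have hALegal : NwLegal 𝒩 A := ⟨Set.sep_subset _ _, isNetwork_sep h𝒩net C hC⟩
    set f : Set X → ι := fun N => if h : ∃ i, N ⊆ U i then h.choose else i₀ with hfdef
    refine ⟨(nwResp σ H n A).image f, fun x hx => ?_⟩
    obtain ⟨N, hNmem, hxN⟩ := nwK_subset hALegal hx
    have hNA : N ∈ A := nwResp_subset hw hH (hALegal.ctbl h𝒩c) n hNmem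
    have hNi : ∃ i, N ⊆ U i := by
      rcases hNA.2 with h | h
      · exact h
      · exact absurd (h hxN) (by simpa using hx)
    have hfN : N ⊆ U (f N) := by
      rw [hfdef]
      simp only [dif_pos hNi]
      exact hNi.choose_spec
    simp only [Set.mem_iUnion]
    exact ⟨f N, Finset.mem_image_of_mem f hNmem, hfN hxN⟩
  · rw [Set.not_nonempty_iff_eq_empty] at hne
    exact ⟨∅, by simp [hne]⟩

variable (σ : MBobStrategy X) (𝒩 : Set (Set X)) (e : ℕ → Set X)

/-- A canonical legal move realizing a prescribed response (coded by a finset of naturals). -/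
noncomputable def nwWit (H : ℕ → Set (Set X)) (n : ℕ) (c : Finset ℕ) : Set (Set X) :=
  if h : ∃ A, NwLegal 𝒩 A ∧ nwResp σ H n A = c.image e then h.choose else 𝒩

/-- The canonical history realizing a coded sequence of responses (most recent first);
positions beyond the length are padded with `𝒩`. -/
noncomputable def nwHist : List (Finset ℕ) → ℕ → Set (Set X)
  | [] => fun _ => 𝒩
  | c :: t => fun k =>
      if k = t.length then nwWit σ 𝒩 e (nwHist t) t.length c else nwHist t k

lemma nwHist_legal (h𝒩 : NwLegal 𝒩 𝒩) : ∀ (t : List (Finset ℕ)) (k : ℕ),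
    NwLegal 𝒩 (nwHist σ 𝒩 e t k) := by
  intro t
  induction t with
  | nil => intro k; exact h𝒩
  | cons c t ih =>
      intro k
      simp only [nwHist]
      by_cases hk : k = t.length
      · rw [if_pos hk, nwWit]
        split
        · next h => exact h.choose_spec.1
        · exact h𝒩
      · rw [if_neg hk]; exact ih k

lemma nwHist_cons_ne (c : Finset ℕ) (t : List (Finset ℕ)) {k : ℕ} (hk : k ≠ t.length) :
    nwHist σ 𝒩 e (c :: t) k = nwHist σ 𝒩 e t k := by
  simp only [nwHist]
  rw [if_neg hk]

end NwAux

lemma nwK_cover {X : Type*} [TopologicalSpace X] {σ : MBobStrategy X} (hw : MBobWinning σ)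
    {𝒩 : Set (Set X)} (h𝒩c : 𝒩.Countable) (h𝒩 : NwLegal 𝒩 𝒩) {e : ℕ → Set X}
    (he : 𝒩 = Set.range e) (x : X) :
    ∃ t : List (Finset ℕ), x ∈ nwK σ 𝒩 (nwHist σ 𝒩 e t) t.length := by
  classical
  by_contra hx
  push_neg at hx
  have hH : ∀ (t : List (Finset ℕ)) (k : ℕ), nwHist σ 𝒩 e t k ∈ CtblNetwork X :=
    fun t k => (nwHist_legal σ 𝒩 e h𝒩 t k).ctbl h𝒩c
  have hbad : ∀ t : List (Finset ℕ),
      ∃ A, NwLegal 𝒩 A ∧ x ∉ ⋃₀ ↑(nwResp σ (nwHist σ 𝒩 e t) t.length A) :=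
    fun t => not_mem_nwK (hx t)
  choose bad hbadLegal hbadmiss using hbad
  have hcode : ∀ t : List (Finset ℕ),
      ∃ c : Finset ℕ, c.image e = nwResp σ (nwHist σ 𝒩 e t) t.length (bad t) := by
    intro t
    set F := nwResp σ (nwHist σ 𝒩 e t) t.length (bad t) with hF
    have hsub : ↑F ⊆ Set.range e := by
      rw [← he]
      exact (nwResp_subset hw (hH t) ((hbadLegal t).ctbl h𝒩c) t.length).trans (hbadLegal t).1
    set g : Set X → ℕ := fun N => if h : ∃ k, e k = N then h.choose else 0 with hg
    refine ⟨F.image g, ?_⟩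
    rw [Finset.image_image]
    have : ∀ N ∈ F, (e ∘ g) N = id N := by
      intro N hN
      have hr : ∃ k, e k = N := hsub hN
      simp only [hg, Function.comp_apply, dif_pos hr, id_eq]
      exact hr.choose_spec
    rw [Finset.image_congr this, Finset.image_id]
  choose code hcodespec using hcode
  set step : List (Finset ℕ) → List (Finset ℕ) := fun t => code t :: t with hstep
  set t : ℕ → List (Finset ℕ) := fun n => step^[n] [] with ht
  have htsucc : ∀ n, t (n + 1) = code (t n) :: t n := by
    intro n
    rw [ht]
    simp only [Function.iterate_succ_apply']
    rfl
  have htlen : ∀ n, (t n).length = n := by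
    intro n
    induction n with
    | zero => rfl
    | succ n ih => rw [htsucc n]; simp [ih]
  set m : ℕ → Set (Set X) := fun n => nwHist σ 𝒩 e (t (n + 1)) n with hm
  have hm_eq : ∀ n, m n = nwWit σ 𝒩 e (nwHist σ 𝒩 e (t n)) n (code (t n)) := by
    intro n
    rw [hm]
    simp only [htsucc n, nwHist, htlen n, eq_self_iff_true, if_true]
  have hm_spec : ∀ n, NwLegal 𝒩 (m n) ∧
      nwResp σ (nwHist σ 𝒩 e (t n)) n (m n) = (code (t n)).image e := by
    intro n
    have hex : ∃ A, NwLegal 𝒩 A ∧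
        nwResp σ (nwHist σ 𝒩 e (t n)) n A = (code (t n)).image e := by
      refine ⟨bad (t n), hbadLegal (t n), ?_⟩
      rw [hcodespec (t n), htlen n]
    rw [hm_eq n, nwWit, dif_pos hex]
    exact ⟨hex.choose_spec.1, hex.choose_spec.2⟩
  have hmiss : ∀ n, x ∉ ⋃₀ (↑((code (t n)).image e) : Set (Set X)) := by
    intro n
    rw [hcodespec (t n)]
    exact hbadmiss (t n)
  have hstab : ∀ n k, k < n → nwHist σ 𝒩 e (t n) k = m k := by
    intro n
    induction n with
    | zero => exact fun k hk => absurd hk (Nat.not_lt_zero k)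
    | succ n ih =>
        intro k hk
        rcases Nat.lt_succ_iff_lt_or_eq.mp hk with h | h
        · rw [htsucc n, nwHist_cons_ne σ 𝒩 e _ _ (by rw [htlen n]; omega)]
          exact ih k h
        · subst h; rfl
  have hmc : ∀ n, m n ∈ CtblNetwork X := fun n => ((hm_spec n).1).ctbl h𝒩c
  have hkey : ∀ n, σ n (fun i : Fin (n + 1) => m i.1) =
      nwResp σ (nwHist σ 𝒩 e (t n)) n (m n) := by
    intro n
    unfold nwResp
    congr 1
    funext i
    by_cases hi : i.1 = n
    · rw [if_pos hi, hi]
    · rw [if_neg hi]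
      have hlt : i.1 < n := Nat.lt_of_le_of_ne (Nat.lt_succ_iff.mp i.2) hi
      exact (hstab n i.1 hlt).symm
  obtain ⟨-, hnet⟩ := hw m hmc
  obtain ⟨N, hN, hxN, -⟩ := hnet x Set.univ isOpen_univ (Set.mem_univ x)
  rw [Set.mem_iUnion] at hN
  obtain ⟨n, hn⟩ := hN
  have heq : (σ n fun i : Fin (n + 1) => m i.1) = (code (t n)).image e :=
    (hkey n).trans (hm_spec n).2
  rw [heq] at hn
  exact hmiss n ⟨N, hn, hxN⟩


theorem stmt12 {X : Type*} [TopologicalSpace X] [T3Space X]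
    (hnw : (CtblNetwork X).Nonempty) (h : MBobWins X) :
    SigmaCompactSpace X := by
  classical
  obtain ⟨N₀, hN₀c, hN₀net⟩ := hnw
  obtain ⟨σ, hw⟩ := h
  set 𝒩 : Set (Set X) := insert ∅ (closure '' N₀) with h𝒩def
  have h𝒩c : 𝒩.Countable := (hN₀c.image _).insert _
  have h𝒩cl : ∀ N ∈ 𝒩, IsClosed N := by
    rintro N (rfl | ⟨M, -, rfl⟩)
    · exact isClosed_empty
    · exact isClosed_closure
  have h𝒩net : IsNetwork 𝒩 := by
    intro x U hU hx
    obtain ⟨V, hV, hVc, hVU⟩ := exists_mem_nhds_isClosed_subset (hU.mem_nhds hx)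
    obtain ⟨M, hM, hxM, hMsub⟩ := hN₀net x (interior V) isOpen_interior
      (mem_interior_iff_mem_nhds.mpr hV)
    refine ⟨closure M, Set.mem_insert_of_mem _ ⟨M, hM, rfl⟩, subset_closure hxM, ?_⟩
    exact ((closure_mono hMsub).trans (closure_minimal interior_subset hVc)).trans hVU
  have hLegal : NwLegal 𝒩 𝒩 := ⟨subset_rfl, h𝒩net⟩
  obtain ⟨e, he⟩ := h𝒩c.exists_eq_range ⟨∅, Set.mem_insert _ _⟩
  obtain ⟨u, hu⟩ := exists_surjective_nat (List (Finset ℕ))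
  refine ⟨⟨fun n => nwK σ 𝒩 (nwHist σ 𝒩 e (u n)) (u n).length, fun n => ?_, ?_⟩⟩
  · exact nwK_isCompact hw h𝒩c h𝒩net h𝒩cl
      (fun k => (nwHist_legal σ 𝒩 e hLegal (u n) k).ctbl h𝒩c) _
  · refine Set.eq_univ_of_forall fun x => ?_
    obtain ⟨tt, hx⟩ := nwK_cover hw h𝒩c hLegal he x
    obtain ⟨n, rfl⟩ := hu tt
    exact Set.mem_iUnion.mpr ⟨n, hx⟩
end

section
/- If X is a regular space in which Bob has a winning strategy in the M-nw-selective game, then X is a countable union of compact metrizable subspaces. -/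
open Set Cardinal TopologicalSpace

/-! ### Auxiliary development for `stmt15` -/

section Stmt15Aux

open scoped Classical

variable {X : Type*} [TopologicalSpace X]

/-- Countable networks consisting of closed sets. -/
def ClosedNet (X : Type*) [TopologicalSpace X] : Set (Set (Set X)) :=
  {𝒜 | 𝒜 ∈ CtblNetwork X ∧ ∀ N ∈ 𝒜, IsClosed N}

lemma net_lindelof {𝒩 : Set (Set X)} (hc : 𝒩.Countable) (hn : IsNetwork 𝒩)
    {ι : Type*} (U : ι → Set X) (hU : ∀ i, IsOpen (U i)) (S : Set X) (hS : S ⊆ ⋃ i, U i) :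
    ∃ I : Set ι, I.Countable ∧ S ⊆ ⋃ i ∈ I, U i := by
  classical
  set T : Set (Set X) := {N | N ∈ 𝒩 ∧ ∃ i, N ⊆ U i} with hT
  haveI : Countable T := ((hc.mono (fun N hN => hN.1) : T.Countable)).to_subtype
  refine ⟨Set.range (fun N : T => N.2.2.choose), Set.countable_range _, fun x hx => ?_⟩
  obtain ⟨i, hi⟩ := mem_iUnion.1 (hS hx)
  obtain ⟨N, hN, hxN, hNU⟩ := hn x (U i) (hU i) hi
  have hNT : N ∈ T := ⟨hN, i, hNU⟩
  exact mem_biUnion ⟨(⟨N, hNT⟩ : T), rfl⟩ (hNT.2.choose_spec hxN)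

lemma closedNet_of_network [RegularSpace X] {𝒩 : Set (Set X)} (hc : 𝒩.Countable)
    (hn : IsNetwork 𝒩) : closure '' 𝒩 ∈ ClosedNet X := by
  refine ⟨⟨hc.image _, ?_⟩, ?_⟩
  · intro x U hU hxU
    obtain ⟨t, htn, htc, hts⟩ := exists_mem_nhds_isClosed_subset (hU.mem_nhds hxU)
    obtain ⟨N, hN, hxN, hNs⟩ := hn x (interior t) isOpen_interior (mem_interior_iff_mem_nhds.2 htn)
    exact ⟨closure N, mem_image_of_mem _ hN, subset_closure hxN,
      (closure_minimal (hNs.trans interior_subset) htc).trans hts⟩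
  · rintro N ⟨M, -, rfl⟩
    exact isClosed_closure

variable (σ : MBobStrategy X) (𝒩₀ : Set (Set X))

/-- The "capture set" at a finite history `h` of Alice's moves: the set of points that Bob's
strategy covers at the next move no matter which closed countable network Alice plays. -/
noncomputable def Fc (n : ℕ) (h : Fin n → Set (Set X)) : Set X :=
  ⋂ 𝒜 ∈ ClosedNet X, ⋃₀ ↑(σ n (Fin.snoc h 𝒜))

/-- A countable family of next moves for Alice witnessing (via Lindelöf) that points outside
`Fc σ n h` can be avoided by Bob's response. -/
noncomputable def pick (n : ℕ) (h : Fin n → Set (Set X)) : ℕ → Set (Set X) :=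
  if hc : ∃ g : ℕ → Set (Set X), (∀ m, g m ∈ ClosedNet X) ∧
      (Fc σ n h)ᶜ ⊆ ⋃ m, (⋃₀ ↑(σ n (Fin.snoc h (g m))))ᶜ
  then hc.choose else fun _ => 𝒩₀

/-- The countable tree of histories. -/
noncomputable def Hist : (n : ℕ) → (Fin n → ℕ) → Fin n → Set (Set X)
  | 0, _ => Fin.elim0
  | n + 1, s => Fin.snoc (Hist n (fun i => s i.castSucc))
      (pick σ 𝒩₀ n (Hist n (fun i => s i.castSucc)) (s (Fin.last n)))

variable {σ 𝒩₀}

lemma pick_mem (h𝒩₀ : 𝒩₀ ∈ ClosedNet X) (n : ℕ) (h : Fin n → Set (Set X)) (m : ℕ) :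
    pick σ 𝒩₀ n h m ∈ ClosedNet X := by
  unfold pick
  split_ifs with hc
  · exact hc.choose_spec.1 m
  · exact h𝒩₀

lemma hist_mem (h𝒩₀ : 𝒩₀ ∈ ClosedNet X) :
    ∀ (n : ℕ) (s : Fin n → ℕ) (i : Fin n), Hist σ 𝒩₀ n s i ∈ ClosedNet X := by
  intro n
  induction n with
  | zero => exact fun s i => i.elim0
  | succ n ih =>
    intro s i
    refine Fin.lastCases ?_ ?_ i
    · rw [Hist, Fin.snoc_last]
      exact pick_mem h𝒩₀ _ _ _
    · intro j
      rw [Hist, Fin.snoc_castSucc]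
      exact ih _ j

lemma snoc_legal {n : ℕ} {h : Fin n → Set (Set X)} {𝒜 : Set (Set X)}
    (hh : ∀ i, h i ∈ ClosedNet X) (h𝒜 : 𝒜 ∈ ClosedNet X) :
    ∀ i, (Fin.snoc h 𝒜 : Fin (n + 1) → Set (Set X)) i ∈ ClosedNet X := by
  intro i
  refine Fin.lastCases ?_ ?_ i
  · rw [Fin.snoc_last]; exact h𝒜
  · intro j; rw [Fin.snoc_castSucc]; exact hh j

lemma sigma_sub (hσ : MBobWinning σ) (h𝒩₀ : 𝒩₀ ∈ ClosedNet X) {n : ℕ}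
    {h : Fin (n + 1) → Set (Set X)} (hh : ∀ i, h i ∈ CtblNetwork X) :
    ↑(σ n h) ⊆ h (Fin.last n) := by
  classical
  set A : ℕ → Set (Set X) := fun k => if hk : k < n + 1 then h ⟨k, hk⟩ else 𝒩₀ with hA
  have hA1 : ∀ k, A k ∈ CtblNetwork X := by
    intro k
    by_cases hk : k < n + 1
    · simp only [hA, dif_pos hk]; exact hh _
    · simp only [hA, dif_neg hk]; exact h𝒩₀.1
  have he : (fun i : Fin (n + 1) => A i.1) = h := by
    funext i
    simp [hA, i.2, Fin.is_le i]
  have h1 := (hσ A hA1).1 n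
  rw [he] at h1
  have hAn : A n = h (Fin.last n) := by
    simp only [hA, Nat.lt_succ_self, dif_pos]
    rfl
  rwa [hAn] at h1

lemma sigma_sub_snoc (hσ : MBobWinning σ) (h𝒩₀ : 𝒩₀ ∈ ClosedNet X) {n : ℕ}
    {h : Fin n → Set (Set X)} (hh : ∀ i, h i ∈ ClosedNet X) {𝒜 : Set (Set X)}
    (h𝒜 : 𝒜 ∈ ClosedNet X) : ↑(σ n (Fin.snoc h 𝒜)) ⊆ 𝒜 := by
  have := sigma_sub hσ h𝒩₀ (h := Fin.snoc h 𝒜) (fun i => (snoc_legal hh h𝒜 i).1)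
  rwa [Fin.snoc_last] at this

lemma sUnion_closed (hσ : MBobWinning σ) (h𝒩₀ : 𝒩₀ ∈ ClosedNet X) {n : ℕ}
    {h : Fin n → Set (Set X)} (hh : ∀ i, h i ∈ ClosedNet X) {𝒜 : Set (Set X)}
    (h𝒜 : 𝒜 ∈ ClosedNet X) :
    IsClosed (⋃₀ (↑(σ n (Fin.snoc h 𝒜)) : Set (Set X))) := by
  rw [sUnion_eq_biUnion]
  exact (σ n (Fin.snoc h 𝒜)).finite_toSet.isClosed_biUnion
    (fun N hN => h𝒜.2 N (sigma_sub_snoc hσ h𝒩₀ hh h𝒜 hN))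

lemma Fc_closed (hσ : MBobWinning σ) (h𝒩₀ : 𝒩₀ ∈ ClosedNet X) {n : ℕ}
    {h : Fin n → Set (Set X)} (hh : ∀ i, h i ∈ ClosedNet X) : IsClosed (Fc σ n h) :=
  isClosed_biInter fun _ h𝒜 => sUnion_closed hσ h𝒩₀ hh h𝒜

lemma Fc_subset {n : ℕ} (h : Fin n → Set (Set X)) {𝒜 : Set (Set X)}
    (h𝒜 : 𝒜 ∈ ClosedNet X) : Fc σ n h ⊆ ⋃₀ ↑(σ n (Fin.snoc h 𝒜)) :=
  biInter_subset_of_mem h𝒜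

lemma Fc_compact (hσ : MBobWinning σ) (h𝒩₀ : 𝒩₀ ∈ ClosedNet X) {n : ℕ}
    {h : Fin n → Set (Set X)} (hh : ∀ i, h i ∈ ClosedNet X) : IsCompact (Fc σ n h) := by
  classical
  refine isCompact_of_finite_subcover fun {ι} U hU hcov => ?_
  by_cases hι : Nonempty ι
  · obtain ⟨I, hIc, hIcov⟩ := net_lindelof h𝒩₀.1.1 h𝒩₀.1.2 U hU _ hcov
    set F := Fc σ n h with hF
    set 𝒜 : Set (Set X) :=
      {N | N ∈ 𝒩₀ ∧ Disjoint N F} ∪ {N | N ∈ 𝒩₀ ∧ ∃ i ∈ I, N ⊆ U i} with h𝒜def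
    have h𝒜 : 𝒜 ∈ ClosedNet X := by
      refine ⟨⟨(h𝒩₀.1.1.mono (fun N hN => hN.1)).union
        (h𝒩₀.1.1.mono (fun N hN => hN.1)), ?_⟩, ?_⟩
      · intro x V hV hxV
        by_cases hxF : x ∈ F
        · obtain ⟨i, hiI, hxU⟩ := mem_iUnion₂.1 (hIcov hxF)
          obtain ⟨N, hN, hxN, hNs⟩ := h𝒩₀.1.2 x (V ∩ U i) (hV.inter (hU i)) ⟨hxV, hxU⟩
          exact ⟨N, Or.inr ⟨hN, i, hiI, fun y hy => (hNs hy).2⟩, hxN, fun y hy => (hNs hy).1⟩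
        · have hop : IsOpen (V ∩ Fᶜ) := hV.inter (Fc_closed hσ h𝒩₀ hh).isOpen_compl
          obtain ⟨N, hN, hxN, hNs⟩ := h𝒩₀.1.2 x (V ∩ Fᶜ) hop ⟨hxV, hxF⟩
          exact ⟨N, Or.inl ⟨hN, Set.disjoint_left.2 fun y hy => (hNs hy).2⟩, hxN,
            fun y hy => (hNs hy).1⟩
      · rintro N (⟨hN, -⟩ | ⟨hN, -⟩) <;> exact h𝒩₀.2 N hN
    have hFsub : F ⊆ ⋃₀ ↑(σ n (Fin.snoc h 𝒜)) := Fc_subset h h𝒜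
    haveI := hι
    set g : Set X → ι := fun N =>
      if hg : ∃ i ∈ I, N ⊆ U i then hg.choose else Classical.arbitrary ι with hgdef
    refine ⟨(σ n (Fin.snoc h 𝒜)).image g, fun x hxF => ?_⟩
    obtain ⟨N, hNmem, hxN⟩ := hFsub hxF
    have hNA : N ∈ 𝒜 := sigma_sub_snoc hσ h𝒩₀ hh h𝒜 hNmem
    have hg : ∃ i ∈ I, N ⊆ U i := by
      rcases hNA with ⟨-, hdisj⟩ | ⟨-, h2⟩
      · exact absurd hxF (Set.disjoint_left.1 hdisj hxN)
      · exact h2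
    refine mem_biUnion (Finset.mem_image_of_mem g hNmem) ?_
    have hgN : g N = hg.choose := by rw [hgdef]; exact dif_pos hg
    rw [hgN]
    exact hg.choose_spec.2 hxN
  · refine ⟨∅, ?_⟩
    rw [not_nonempty_iff] at hι
    rw [iUnion_of_empty] at hcov
    simpa using hcov

lemma pick_spec (hσ : MBobWinning σ) (h𝒩₀ : 𝒩₀ ∈ ClosedNet X) {n : ℕ}
    {h : Fin n → Set (Set X)} (hh : ∀ i, h i ∈ ClosedNet X) :
    (Fc σ n h)ᶜ ⊆ ⋃ m, (⋃₀ ↑(σ n (Fin.snoc h (pick σ 𝒩₀ n h m))))ᶜ := by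
  classical
  have hc : ∃ g : ℕ → Set (Set X), (∀ m, g m ∈ ClosedNet X) ∧
      (Fc σ n h)ᶜ ⊆ ⋃ m, (⋃₀ ↑(σ n (Fin.snoc h (g m))))ᶜ := by
    set U : Set (Set X) → Set X := fun 𝒜 =>
      if h𝒜 : 𝒜 ∈ ClosedNet X then (⋃₀ ↑(σ n (Fin.snoc h 𝒜)))ᶜ else ∅ with hUdef
    have hUopen : ∀ 𝒜, IsOpen (U 𝒜) := by
      intro 𝒜
      by_cases h𝒜 : 𝒜 ∈ ClosedNet X
      · rw [hUdef]; simp only [dif_pos h𝒜]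
        exact (sUnion_closed hσ h𝒩₀ hh h𝒜).isOpen_compl
      · rw [hUdef]; simp only [dif_neg h𝒜]; exact isOpen_empty
    have hcov : (Fc σ n h)ᶜ ⊆ ⋃ 𝒜, U 𝒜 := by
      intro x hx
      have : ∃ 𝒜 ∈ ClosedNet X, x ∉ ⋃₀ ↑(σ n (Fin.snoc h 𝒜)) := by
        by_contra hcon
        push_neg at hcon
        exact hx (mem_iInter₂.2 fun 𝒜 h𝒜 => hcon 𝒜 h𝒜)
      obtain ⟨𝒜, h𝒜, hx𝒜⟩ := this
      refine mem_iUnion.2 ⟨𝒜, ?_⟩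
      rw [hUdef]; simp only [dif_pos h𝒜]; exact hx𝒜
    obtain ⟨I, hIc, hIcov⟩ := net_lindelof h𝒩₀.1.1 h𝒩₀.1.2 U hUopen _ hcov
    obtain ⟨f, hf⟩ := (hIc.insert 𝒩₀).exists_eq_range (insert_nonempty _ _)
    refine ⟨fun m => if f m ∈ ClosedNet X then f m else 𝒩₀,
      fun m => by dsimp only; split_ifs with hfm; exacts [hfm, h𝒩₀], ?_⟩
    intro x hx
    obtain ⟨𝒜, h𝒜I, hxU⟩ := mem_iUnion₂.1 (hIcov hx)
    have h𝒜net : 𝒜 ∈ ClosedNet X := by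
      by_contra hcon
      rw [hUdef] at hxU; simp only [dif_neg hcon] at hxU
      exact hxU
    have h𝒜ins : 𝒜 ∈ insert 𝒩₀ I := Set.mem_insert_of_mem _ h𝒜I
    rw [hf] at h𝒜ins
    obtain ⟨m, hm⟩ := h𝒜ins
    refine mem_iUnion.2 ⟨m, ?_⟩
    dsimp only
    rw [if_pos (hm ▸ h𝒜net), hm]
    rw [hUdef] at hxU; simpa only [dif_pos h𝒜net] using hxU
  have : pick σ 𝒩₀ n h = hc.choose := by unfold pick; exact dif_pos hc
  rw [this]
  exact hc.choose_spec.2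

variable (σ 𝒩₀)

/-- Alice's sequence of indices trying to avoid covering `x`. -/
noncomputable def jseq (x : X) : ℕ → ℕ
  | n =>
    if hc : ∃ m : ℕ, x ∉ ⋃₀ ↑(σ n (Fin.snoc (Hist σ 𝒩₀ n (fun i : Fin n => jseq x i.1))
        (pick σ 𝒩₀ n (Hist σ 𝒩₀ n (fun i : Fin n => jseq x i.1)) m)))
    then hc.choose else 0
  termination_by n => n
  decreasing_by all_goals exact i.2

variable {σ 𝒩₀}

lemma hist_run_eq (x : X) :
    ∀ n : ℕ, (fun i : Fin n =>
        pick σ 𝒩₀ i.1 (Hist σ 𝒩₀ i.1 (fun j : Fin i.1 => jseq σ 𝒩₀ x j.1)) (jseq σ 𝒩₀ x i.1))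
      = Hist σ 𝒩₀ n (fun i : Fin n => jseq σ 𝒩₀ x i.1) := by
  intro n
  induction n with
  | zero => funext i; exact i.elim0
  | succ n ih =>
    funext i
    rw [Hist]
    have hcomp : (fun j : Fin n => (fun i : Fin (n + 1) => jseq σ 𝒩₀ x i.1) j.castSucc)
        = fun j : Fin n => jseq σ 𝒩₀ x j.1 := rfl
    rw [hcomp]
    refine Fin.lastCases ?_ ?_ i
    · rw [Fin.snoc_last]
      simp only [Fin.val_last]
    · intro j
      rw [Fin.snoc_castSucc, ← ih]
      simp only [Fin.coe_castSucc]

lemma cover_aux (hσ : MBobWinning σ) (h𝒩₀ : 𝒩₀ ∈ ClosedNet X) (x : X) :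
    ∃ (n : ℕ) (s : Fin n → ℕ), x ∈ Fc σ n (Hist σ 𝒩₀ n s) := by
  by_contra hcon
  push_neg at hcon
  set A : ℕ → Set (Set X) := fun n =>
    pick σ 𝒩₀ n (Hist σ 𝒩₀ n (fun i : Fin n => jseq σ 𝒩₀ x i.1)) (jseq σ 𝒩₀ x n) with hAdef
  have hA : ∀ n, A n ∈ CtblNetwork X := fun n => (pick_mem h𝒩₀ _ _ _).1
  have hnot : ∀ n, x ∉ ⋃₀ ↑(σ n (fun i : Fin (n + 1) => A i.1)) := by
    intro n
    have hx : x ∉ Fc σ n (Hist σ 𝒩₀ n (fun i : Fin n => jseq σ 𝒩₀ x i.1)) := hcon n _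
    have hcc : ∃ m : ℕ, x ∉ ⋃₀ ↑(σ n (Fin.snoc (Hist σ 𝒩₀ n (fun i : Fin n => jseq σ 𝒩₀ x i.1))
        (pick σ 𝒩₀ n (Hist σ 𝒩₀ n (fun i : Fin n => jseq σ 𝒩₀ x i.1)) m))) := by
      have hm := pick_spec hσ h𝒩₀ (hist_mem h𝒩₀ n _) hx
      obtain ⟨m, hm'⟩ := mem_iUnion.1 hm
      exact ⟨m, hm'⟩
    have hkey : x ∉ ⋃₀ ↑(σ n (Fin.snoc (Hist σ 𝒩₀ n (fun i : Fin n => jseq σ 𝒩₀ x i.1))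
        (pick σ 𝒩₀ n (Hist σ 𝒩₀ n (fun i : Fin n => jseq σ 𝒩₀ x i.1)) (jseq σ 𝒩₀ x n)))) := by
      rw [jseq, dif_pos hcc]
      exact hcc.choose_spec
    have heq : (fun i : Fin (n + 1) => A i.1)
        = Fin.snoc (Hist σ 𝒩₀ n (fun i : Fin n => jseq σ 𝒩₀ x i.1)) (A n) := by
      have h1 := hist_run_eq (σ := σ) (𝒩₀ := 𝒩₀) x (n + 1)
      rw [hAdef]
      rw [h1, Hist]
      rfl
    rw [heq]
    exact hkey
  have hnet := (hσ A hA).2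
  obtain ⟨N, hN, hxN, -⟩ := hnet x Set.univ isOpen_univ (mem_univ x)
  obtain ⟨n, hn⟩ := mem_iUnion.1 hN
  exact hnot n ⟨N, hn, hxN⟩

lemma subtype_network {S : Set X} {𝒩 : Set (Set X)} (hn : IsNetwork 𝒩) :
    IsNetwork ((fun N => ((Subtype.val ⁻¹' N : Set S))) '' 𝒩) := by
  intro x U hU hxU
  obtain ⟨V, hV, rfl⟩ := isOpen_induced_iff.1 hU
  obtain ⟨N, hN, h1, h2⟩ := hn x.1 V hV hxU
  exact ⟨_, ⟨N, hN, rfl⟩, h1, fun y hy => h2 hy⟩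

lemma metrizable_of_compact_network {Y : Type*} [TopologicalSpace Y] [T2Space Y]
    [CompactSpace Y] {𝒩 : Set (Set Y)} (hc : 𝒩.Countable) (hn : IsNetwork 𝒩) :
    TopologicalSpace.MetrizableSpace Y := by
  haveI : SecondCountableTopology Y := by
    classical
    set P : Set (Set Y × Set Y) :=
      {p | p.1 ∈ 𝒩 ∧ p.2 ∈ 𝒩 ∧ Disjoint (closure p.1) (closure p.2)} with hPdef
    haveI : Countable P :=
      ((hc.prod hc).mono (fun p hp => Set.mem_prod.2 ⟨hp.1, hp.2.1⟩) : P.Countable).to_subtype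
    have hsep : ∀ p : P, ∃ u v : Set Y, IsOpen u ∧ IsOpen v ∧
        closure (p : Set Y × Set Y).1 ⊆ u ∧ closure (p : Set Y × Set Y).2 ⊆ v ∧ Disjoint u v :=
      fun p => NormalSpace.normal _ _ isClosed_closure isClosed_closure p.2.2.2
    choose u v hu hv hcu hcv hdisj using hsep
    refine TopologicalSpace.IsTopologicalBasis.secondCountableTopology
      (b := Set.range (fun s : Finset P => ⋂ p ∈ s, u p))
      (isTopologicalBasis_of_isOpen_of_nhds ?_ ?_) (countable_range _)
    · rintro W ⟨s, rfl⟩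
      exact isOpen_biInter_finset fun p _ => hu p
    · intro x W hxW hW
      have hCc : IsCompact (Wᶜ) := hW.isClosed_compl.isCompact
      have key : ∀ y : (Wᶜ : Set Y), ∃ p : P, x ∈ u p ∧ (y : Y) ∈ v p := by
        intro y
        have hxy : x ≠ (y : Y) := fun h => y.2 (h ▸ hxW)
        obtain ⟨O1, O2, hO1, hO2, hxO, hyO, hOd⟩ := t2_separation hxy
        obtain ⟨C1, hC1n, hC1c, hC1s⟩ := exists_mem_nhds_isClosed_subset (hO1.mem_nhds hxO)
        obtain ⟨C2, hC2n, hC2c, hC2s⟩ := exists_mem_nhds_isClosed_subset (hO2.mem_nhds hyO)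
        obtain ⟨M, hM, hxM, hMs⟩ :=
          hn x (interior C1) isOpen_interior (mem_interior_iff_mem_nhds.2 hC1n)
        obtain ⟨N, hN, hyN, hNs⟩ :=
          hn (y : Y) (interior C2) isOpen_interior (mem_interior_iff_mem_nhds.2 hC2n)
        have hMc : closure M ⊆ O1 := (closure_minimal (hMs.trans interior_subset) hC1c).trans hC1s
        have hNc : closure N ⊆ O2 := (closure_minimal (hNs.trans interior_subset) hC2c).trans hC2s
        have hP : (M, N) ∈ P := ⟨hM, hN, Set.disjoint_of_subset hMc hNc hOd⟩
        exact ⟨⟨(M, N), hP⟩, hcu _ (subset_closure hxM), hcv _ (subset_closure hyN)⟩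
      choose pf hpu hpv using key
      obtain ⟨t, ht⟩ := hCc.elim_finite_subcover (fun y : (Wᶜ : Set Y) => v (pf y))
        (fun y => hv _) (fun z hz => mem_iUnion.2 ⟨⟨z, hz⟩, hpv ⟨z, hz⟩⟩)
      refine ⟨⋂ p ∈ t.image pf, u p, ⟨t.image pf, rfl⟩, ?_, ?_⟩
      · refine mem_iInter₂.2 fun p hp => ?_
        obtain ⟨y, -, rfl⟩ := Finset.mem_image.1 hp
        exact hpu y
      · intro z hz
        by_contra hzW
        obtain ⟨y, hyt, hzy⟩ := mem_iUnion₂.1 (ht hzW)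
        have hzu : z ∈ u (pf y) := mem_iInter₂.1 hz (pf y) (Finset.mem_image_of_mem pf hyt)
        exact Set.disjoint_left.1 (hdisj (pf y)) hzu hzy
  infer_instance

end Stmt15Aux

theorem stmt15 {X : Type*} [TopologicalSpace X] [T3Space X]
    (hnw : (CtblNetwork X).Nonempty) (h : MBobWins X) :
    ∃ K : ℕ → Set X, (∀ n, IsCompact (K n) ∧ TopologicalSpace.MetrizableSpace (K n)) ∧
      ⋃ n, K n = Set.univ := by
  classical
  obtain ⟨𝒩', h𝒩'⟩ := hnw
  set 𝒩₀ : Set (Set X) := closure '' 𝒩' with h𝒩₀def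
  have h𝒩₀ : 𝒩₀ ∈ ClosedNet X := closedNet_of_network h𝒩'.1 h𝒩'.2
  obtain ⟨σ, hσ⟩ := h
  haveI : Nonempty ((n : ℕ) × (Fin n → ℕ)) := ⟨⟨0, Fin.elim0⟩⟩
  obtain ⟨e, he⟩ := exists_surjective_nat ((n : ℕ) × (Fin n → ℕ))
  refine ⟨fun k => Fc σ (e k).1 (Hist σ 𝒩₀ (e k).1 (e k).2), fun k => ⟨?_, ?_⟩, ?_⟩
  · exact Fc_compact hσ h𝒩₀ (hist_mem h𝒩₀ _ _)
  · have hcpt : IsCompact (Fc σ (e k).1 (Hist σ 𝒩₀ (e k).1 (e k).2)) :=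
      Fc_compact hσ h𝒩₀ (hist_mem h𝒩₀ _ _)
    haveI : CompactSpace (Fc σ (e k).1 (Hist σ 𝒩₀ (e k).1 (e k).2)) :=
      isCompact_iff_compactSpace.1 hcpt
    exact metrizable_of_compact_network (h𝒩₀.1.1.image _) (subtype_network h𝒩₀.1.2)
  · refine Set.eq_univ_of_forall fun x => ?_
    obtain ⟨n, s, hx⟩ := cover_aux hσ h𝒩₀ x
    obtain ⟨k, hk⟩ := he ⟨n, s⟩
    refine mem_iUnion.2 ⟨k, ?_⟩
    rw [hk]
    exact hx
end
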